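/- arXiv:1607.05933 — 5 statements merged into one kernel-verified Lean document; each statement's English description precedes it below -/
import Mathlib

section
/- Let d ≥ 1 be an integer, let F ⊆ ℝ^d be a universal differentiability set, and let A be a relatively closed subset of F (i.e., A = F ∩ C for some closed set C ⊆ ℝ^d). Then either A is a universal differentiability set or F \ A is a universal differentiability set. -/
open Metric Set Filter

/-- A set `S ⊆ ℝ^d` is a universal differentiability set (UDS) if every Lipschitz
function `f : ℝ^d → ℝ` is differentiable at at least one point of `S`. -/
def IsUDS (d : ℕ) (S : Set (EuclideanSpace ℝ (Fin d))) : Prop :=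
  ∀ f : EuclideanSpace ℝ (Fin d) → ℝ, (∃ K : NNReal, LipschitzWith K f) →
    ∃ x ∈ S, DifferentiableAt ℝ f x

/-- The kernel `K(S) = S \ {x ∈ S : ∃ ε > 0, B(x,ε) ∩ S is a non-UDS}`. -/
def kernelUDS (d : ℕ) (S : Set (EuclideanSpace ℝ (Fin d))) :
    Set (EuclideanSpace ℝ (Fin d)) :=
  S \ {x | x ∈ S ∧ ∃ ε > 0, ¬ IsUDS d (Metric.ball x ε ∩ S)}

/-- A box in `ℝ^d` is a product of closed bounded intervals. -/
def IsBox (d : ℕ) (U : Set (EuclideanSpace ℝ (Fin d))) : Prop :=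
  ∃ a b : Fin d → ℝ,
    U = {x : EuclideanSpace ℝ (Fin d) | ∀ i, x i ∈ Set.Icc (a i) (b i)}

/-- Distance between two sets, with the convention `dist(A, ∅) = 1`. -/
noncomputable def setDist {α : Type*} [PseudoMetricSpace α] (A B : Set α) : ℝ :=
  haveI := Classical.propDecidable B.Nonempty
  if B.Nonempty then sInf {r : ℝ | ∃ a ∈ A, ∃ b ∈ B, r = dist a b} else 1

/-- The smallest Lipschitz constant of `f`. -/
noncomputable def lipConst {α : Type*} [PseudoMetricSpace α] (f : α → ℝ) : NNReal :=
  sInf {K : NNReal | LipschitzWith K f}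


open scoped Topology NNReal
open MeasureTheory

noncomputable def auxChi : ℝ → ℝ := fun t => 1 - Real.smoothTransition (t - 1)

lemma auxChi_of_le_one {t : ℝ} (ht : t ≤ 1) : auxChi t = 1 := by
  simp [auxChi, Real.smoothTransition.zero_of_nonpos (by linarith : t - 1 ≤ 0)]

lemma auxChi_of_two_le {t : ℝ} (ht : 2 ≤ t) : auxChi t = 0 := by
  simp [auxChi, Real.smoothTransition.one_of_one_le (by linarith : 1 ≤ t - 1)]

lemma auxChi_nonneg (t : ℝ) : 0 ≤ auxChi t := by
  simp [auxChi, Real.smoothTransition.le_one]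

lemma auxChi_le_one (t : ℝ) : auxChi t ≤ 1 := by
  simp [auxChi, Real.smoothTransition.nonneg]

lemma auxChi_contDiff : ContDiff ℝ (1 : ℕ∞) auxChi :=
  contDiff_const.sub ((Real.smoothTransition.contDiff (n := 1)).comp
    (contDiff_id.sub contDiff_const))

lemma auxChi_differentiable : Differentiable ℝ auxChi :=
  auxChi_contDiff.differentiable (by simp)

lemma exists_auxChi_lip : ∃ M : ℝ, 0 ≤ M ∧ ∀ a b : ℝ, |auxChi a - auxChi b| ≤ M * |a - b| := by
  set g := Real.smoothTransition with hg
  have hgd : Differentiable ℝ g :=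
    (Real.smoothTransition.contDiff (n := 1)).differentiable (by simp)
  have h0 : ∀ t : ℝ, t < 0 → deriv g t = 0 := by
    intro t ht
    have : g =ᶠ[𝓝 t] fun _ => (0:ℝ) :=
      Filter.eventually_of_mem (Iio_mem_nhds ht)
        (fun y hy => Real.smoothTransition.zero_of_nonpos (le_of_lt hy))
    rw [this.deriv_eq, deriv_const]
  have h1 : ∀ t : ℝ, 1 < t → deriv g t = 0 := by
    intro t ht
    have : g =ᶠ[𝓝 t] fun _ => (1:ℝ) :=
      Filter.eventually_of_mem (Ioi_mem_nhds ht)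
        (fun y hy => Real.smoothTransition.one_of_one_le (le_of_lt hy))
    rw [this.deriv_eq, deriv_const]
  have hcs : HasCompactSupport (deriv g) := by
    apply HasCompactSupport.intro (isCompact_Icc (a := (0:ℝ)) (b := 1))
    intro x hx
    simp only [Set.mem_Icc, not_and_or, not_le] at hx
    rcases hx with h | h
    · exact h0 x h
    · exact h1 x h
  have hcont : Continuous (deriv g) :=
    (Real.smoothTransition.contDiff (n := 1)).continuous_deriv (by exact_mod_cast le_rfl)
  obtain ⟨Mc, hMc⟩ := hcs.exists_bound_of_continuous hcont
  refine ⟨max Mc 0, le_max_right _ _, fun a b => ?_⟩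
  have key : ∀ x y : ℝ, ‖g y - g x‖ ≤ max Mc 0 * ‖y - x‖ := by
    intro x y
    refine Convex.norm_image_sub_le_of_norm_deriv_le (fun z _ => hgd z)
      (fun z _ => le_trans (hMc z) (le_max_left _ _)) convex_univ (mem_univ x) (mem_univ y)
  have := key (b - 1) (a - 1)
  simpa [auxChi, Real.norm_eq_abs, sub_sub_sub_cancel_right, abs_sub_comm] using this

noncomputable def auxTheta (k : ℕ) (t : ℝ) : ℝ :=
  auxChi ((2:ℝ)^k * t) - auxChi ((2:ℝ)^(k+1) * t)

lemma auxTheta_zero (k : ℕ) : auxTheta k 0 = 0 := by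
  simp [auxTheta, auxChi_of_le_one]

lemma abs_auxTheta_le_one (k : ℕ) (t : ℝ) : |auxTheta k t| ≤ 1 := by
  have h1 := auxChi_nonneg ((2:ℝ)^k * t)
  have h2 := auxChi_le_one ((2:ℝ)^k * t)
  have h3 := auxChi_nonneg ((2:ℝ)^(k+1) * t)
  have h4 := auxChi_le_one ((2:ℝ)^(k+1) * t)
  have he : auxTheta k t = auxChi ((2:ℝ)^k * t) - auxChi ((2:ℝ)^(k+1) * t) := rfl
  rw [abs_le, he]
  constructor <;> linarith

lemma auxTheta_ne_zero_bounds {k : ℕ} {t : ℝ} (ht : 0 ≤ t) (h : auxTheta k t ≠ 0) :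
    1 < (2:ℝ)^(k+1) * t ∧ (2:ℝ)^k * t < 2 := by
  constructor
  · by_contra h'
    push_neg at h'
    have hk : (2:ℝ)^k * t ≤ (2:ℝ)^(k+1) * t := by
      have : (2:ℝ)^k ≤ (2:ℝ)^(k+1) := pow_le_pow_right₀ one_le_two (Nat.le_succ k)
      exact mul_le_mul_of_nonneg_right this ht
    exact h (by simp [auxTheta, auxChi_of_le_one (le_trans hk h'), auxChi_of_le_one h'])
  · by_contra h'
    push_neg at h'
    have hk : (2:ℝ)^k * t ≤ (2:ℝ)^(k+1) * t := by
      have : (2:ℝ)^k ≤ (2:ℝ)^(k+1) := pow_le_pow_right₀ one_le_two (Nat.le_succ k)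
      exact mul_le_mul_of_nonneg_right this ht
    exact h (by simp [auxTheta, auxChi_of_two_le h', auxChi_of_two_le (le_trans h' hk)])

lemma auxTheta_window {k k' : ℕ} {t : ℝ} (ht : 0 ≤ t) (h : auxTheta k t ≠ 0)
    (h' : auxTheta k' t ≠ 0) : k' ≤ k + 1 := by
  have h1 := (auxTheta_ne_zero_bounds ht h).1
  have h2 := (auxTheta_ne_zero_bounds ht h').2
  have htpos : 0 < t := by
    rcases lt_or_eq_of_le ht with h | h
    · exact h
    · exfalso; rw [← h] at h1; simp at h1; linarith
  have hlt : (2:ℝ)^k' * t < (2:ℝ)^(k+2) * t := by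
    have : (2:ℝ)^(k+2) * t = 2 * ((2:ℝ)^(k+1) * t) := by ring
    rw [this]
    calc (2:ℝ)^k' * t < 2 := h2
    _ ≤ 2 * ((2:ℝ)^(k+1) * t) := by nlinarith
  have : (2:ℝ)^k' < (2:ℝ)^(k+2) := lt_of_mul_lt_mul_right hlt (le_of_lt htpos)
  have := (pow_lt_pow_iff_right₀ (by norm_num : (1:ℝ) < 2)).mp this
  omega

lemma auxTheta_cover (t : ℝ) (ht : 0 ≤ t) :
    ∃ F : Finset ℕ, F.card ≤ 3 ∧ ∀ k, auxTheta k t ≠ 0 → k ∈ F := by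
  by_cases h : ∃ k, auxTheta k t ≠ 0
  · obtain ⟨a, ha⟩ := h
    refine ⟨Finset.Icc (a-1) (a+1), ?_, fun k hk => ?_⟩
    · rw [Nat.card_Icc]; omega
    · have h1 := auxTheta_window ht ha hk
      have h2 := auxTheta_window ht hk ha
      rw [Finset.mem_Icc]; omega
  · push_neg at h
    exact ⟨∅, by simp, fun k hk => absurd (h k) (by simpa using hk)⟩

lemma auxTheta_sum (t : ℝ) (N : ℕ) :
    ∑ k ∈ Finset.range (N+1), auxTheta k t = auxChi t - auxChi ((2:ℝ)^(N+1) * t) := by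
  have := Finset.sum_range_sub' (f := fun k => auxChi ((2:ℝ)^k * t)) (n := N+1)
  simpa [auxTheta] using this

lemma abs_tsum_le_of_support {v : ℕ → ℝ} {B : ℝ} {F : Finset ℕ}
    (hsupp : ∀ k ∉ F, v k = 0) (hb : ∀ k, |v k| ≤ B) : |∑' k, v k| ≤ F.card * B := by
  rw [tsum_eq_sum hsupp]
  calc |∑ k ∈ F, v k| ≤ ∑ k ∈ F, |v k| := Finset.abs_sum_le_sum_abs _ _
  _ ≤ ∑ _k ∈ F, B := Finset.sum_le_sum fun k _ => hb k
  _ = F.card * B := by rw [Finset.sum_const, nsmul_eq_mul]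

section Glue

variable {d : ℕ}

local notation "E" => EuclideanSpace ℝ (Fin d)

lemma exists_aux_s (C : Set (EuclideanSpace ℝ (Fin d))) (hC : IsClosed C) (hCne : C.Nonempty)
    (hcc : Cᶜ.Nonempty) :
    ∃ s : EuclideanSpace ℝ (Fin d) → ℝ, LipschitzWith 1 s ∧ Differentiable ℝ s ∧
      (∀ y, 0 ≤ s y) ∧ (∀ y, s y ≤ 1) ∧ (∀ y ∈ C, s y = 0) ∧ ∀ y, y ∉ C → 0 < s y := by
  haveI : Nonempty ↥(Cᶜ) := hcc.to_subtype
  obtain ⟨seq, hseq⟩ := TopologicalSpace.exists_dense_seq ↥(Cᶜ)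
  set xj : ℕ → E := fun j => (seq j : E) with hxjdef
  have hxj : ∀ j, (xj j) ∉ C := fun j => (seq j).2
  set dj : ℕ → ℝ := fun j => infDist (xj j) C with hdjdef
  have hdj : ∀ j, 0 < dj j := fun j => (hC.notMem_iff_infDist_pos hCne).mp (hxj j)
  set rj : ℕ → ℝ := fun j => min (dj j) 1 / 2 with hrjdef
  have hrj : ∀ j, 0 < rj j := fun j => by
    have := hdj j
    have : (0:ℝ) < min (dj j) 1 := lt_min this one_pos
    simp only [hrjdef]; linarith
  set bj : (j : ℕ) → ContDiffBump (xj j) :=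
    fun j => ⟨rj j / 2, rj j, by linarith [hrj j], by linarith [hrj j]⟩ with hbjdef
  have hlipb : ∀ j, ∃ M : ℝ≥0, LipschitzWith M (bj j : E → ℝ) := fun j =>
    ContDiff.lipschitzWith_of_hasCompactSupport (bj j).hasCompactSupport
      ((bj j).contDiff (n := 1)) (by simp)
  choose Mj hMj using hlipb
  set u : ℕ → ℝ := fun j => (1/4) * (1/2)^j with hudef
  have hu : Summable u := summable_geometric_two.mul_left _
  have hut : ∑' j, u j = 1/2 := by
    rw [hudef, tsum_mul_left, tsum_geometric_two]; norm_num
  have hupos : ∀ j, 0 < u j := fun j => by positivity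
  set cj : ℕ → ℝ := fun j => u j * ((1:ℝ) + (Mj j : ℝ))⁻¹ with hcjdef
  have h1M : ∀ j, (0:ℝ) < 1 + (Mj j : ℝ) := fun j => by positivity
  have hcjpos : ∀ j, 0 < cj j := fun j => mul_pos (hupos j) (inv_pos.mpr (h1M j))
  have hcj_le : ∀ j, cj j ≤ u j := fun j => by
    have h1 : ((1:ℝ) + (Mj j : ℝ))⁻¹ ≤ 1 := by
      have : (1:ℝ) ≤ 1 + (Mj j : ℝ) := by
        have := NNReal.coe_nonneg (Mj j); linarith
      exact inv_le_one_of_one_le₀ this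
    calc cj j = u j * ((1:ℝ) + (Mj j : ℝ))⁻¹ := rfl
    _ ≤ u j * 1 := mul_le_mul_of_nonneg_left h1 (hupos j).le
    _ = u j := mul_one _
  have hcjM : ∀ j, cj j * (Mj j : ℝ) ≤ u j := fun j => by
    have : ((1:ℝ) + (Mj j : ℝ))⁻¹ * (Mj j : ℝ) ≤ ((1:ℝ) + (Mj j : ℝ))⁻¹ * (1 + (Mj j : ℝ)) :=
      mul_le_mul_of_nonneg_left (by linarith [NNReal.coe_nonneg (Mj j)])
        (inv_nonneg.mpr (h1M j).le)
    rw [inv_mul_cancel₀ (h1M j).ne'] at this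
    calc cj j * (Mj j : ℝ) = u j * (((1:ℝ) + (Mj j : ℝ))⁻¹ * (Mj j : ℝ)) := by
          rw [hcjdef]; ring
    _ ≤ u j * 1 := mul_le_mul_of_nonneg_left this (hupos j).le
    _ = u j := mul_one _
  have htermnn : ∀ j (y : E), 0 ≤ cj j * bj j y := fun j y =>
    mul_nonneg (hcjpos j).le (bj j).nonneg
  have htermle : ∀ j (y : E), cj j * bj j y ≤ u j := fun j y => by
    calc cj j * bj j y ≤ cj j * 1 := mul_le_mul_of_nonneg_left (bj j).le_one (hcjpos j).le
    _ = cj j := mul_one _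
    _ ≤ u j := hcj_le j
  have hsummable : ∀ y : E, Summable (fun j => cj j * bj j y) := fun y =>
    Summable.of_nonneg_of_le (fun j => htermnn j y) (fun j => htermle j y) hu
  refine ⟨fun y => ∑' j, cj j * bj j y, ?_, ?_, ?_, ?_, ?_, ?_⟩
  · -- Lipschitz 1
    apply LipschitzWith.of_dist_le_mul
    intro x y
    have hbd : ∀ j, ‖cj j * bj j x - cj j * bj j y‖ ≤ u j * dist x y := fun j => by
      rw [← mul_sub, norm_mul, Real.norm_eq_abs, Real.norm_eq_abs,
        abs_of_nonneg (hcjpos j).le]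
      have h1 : |bj j x - bj j y| ≤ (Mj j : ℝ) * dist x y := by
        have := (hMj j).dist_le_mul x y
        rwa [Real.dist_eq] at this
      calc cj j * |bj j x - bj j y| ≤ cj j * ((Mj j : ℝ) * dist x y) :=
            mul_le_mul_of_nonneg_left h1 (hcjpos j).le
      _ = (cj j * (Mj j : ℝ)) * dist x y := by ring
      _ ≤ u j * dist x y := mul_le_mul_of_nonneg_right (hcjM j) dist_nonneg
    have hds : Summable (fun j => ‖cj j * bj j x - cj j * bj j y‖) :=
      Summable.of_nonneg_of_le (fun j => norm_nonneg _) hbd (hu.mul_right _)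
    rw [Real.dist_eq, ← Summable.tsum_sub (hsummable x) (hsummable y)]
    calc |∑' j, (cj j * bj j x - cj j * bj j y)|
        ≤ ∑' j, ‖cj j * bj j x - cj j * bj j y‖ := by
          rw [← Real.norm_eq_abs]; exact norm_tsum_le_tsum_norm hds
    _ ≤ ∑' j, u j * dist x y := Summable.tsum_le_tsum hbd hds (hu.mul_right _)
    _ = (∑' j, u j) * dist x y := tsum_mul_right
    _ = (1/2) * dist x y := by rw [hut]
    _ ≤ 1 * dist x y := by linarith [dist_nonneg (x := x) (y := y)]
  · -- differentiable
    apply differentiable_tsum hu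
      (f' := fun j x => cj j • fderiv ℝ (bj j : E → ℝ) x)
    · intro j x
      exact (((bj j).contDiff (n := 1)).differentiable
        (by simp) x).hasFDerivAt.const_mul (cj j)
    · intro j x
      rw [norm_smul, Real.norm_eq_abs, abs_of_nonneg (hcjpos j).le]
      calc cj j * ‖fderiv ℝ (bj j : E → ℝ) x‖ ≤ cj j * (Mj j : ℝ) :=
            mul_le_mul_of_nonneg_left (norm_fderiv_le_of_lipschitz ℝ (hMj j)) (hcjpos j).le
      _ ≤ u j := hcjM j
  · intro y
    exact tsum_nonneg (fun j => htermnn j y)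
  · intro y
    calc ∑' j, cj j * bj j y ≤ ∑' j, u j := Summable.tsum_le_tsum (fun j => htermle j y) (hsummable y) hu
    _ = 1/2 := hut
    _ ≤ 1 := by norm_num
  · intro y hy
    have hz : ∀ j, cj j * bj j y = 0 := fun j => by
      have hd : (bj j).rOut ≤ dist y (xj j) := by
        have h1 : infDist (xj j) C ≤ dist (xj j) y := infDist_le_dist_of_mem hy
        have h2 : rj j ≤ dj j := by
          have := min_le_left (dj j) 1
          simp only [hrjdef]
          linarith [hdj j]
        calc (bj j).rOut = rj j := rfl
        _ ≤ dj j := h2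
        _ ≤ dist (xj j) y := h1
        _ = dist y (xj j) := dist_comm _ _
      rw [(bj j).zero_of_le_dist hd, mul_zero]
    simp [hz]
  · intro y hy
    set δ := infDist y C with hδdef
    have hδ : 0 < δ := (hC.notMem_iff_infDist_pos hCne).mp hy
    set ε := min δ 1 / 8 with hεdef
    have hε : 0 < ε := by
      have : (0:ℝ) < min δ 1 := lt_min hδ one_pos
      simp only [hεdef]; linarith
    obtain ⟨j, hj⟩ := (Metric.denseRange_iff).mp hseq ⟨y, hy⟩ ε hε
    have hjd : dist y (xj j) < ε := by
      rw [hxjdef]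
      simpa [Subtype.dist_eq] using hj
    -- dj j ≥ δ - ε
    have hdjlb : δ - ε ≤ dj j := by
      have := infDist_le_infDist_add_dist (x := y) (y := xj j) (s := C)
      simp only [hdjdef, hδdef] at *
      linarith [hjd]
    have hrin : dist y (xj j) ≤ (bj j).rIn := by
      have hrin_eq : (bj j).rIn = min (dj j) 1 / 4 := by
        simp only [hbjdef, hrjdef]; ring
      rw [hrin_eq]
      rcases le_total δ 1 with hδ1 | hδ1
      · have hε_eq : ε = δ / 8 := by rw [hεdef, min_eq_left hδ1]
        have h7 : 7 * δ / 8 ≤ dj j := by rw [hε_eq] at hdjlb; linarith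
        have : min (dj j) 1 ≥ 7 * δ / 8 := le_min h7 (by linarith)
        linarith [hjd, hε_eq ▸ hjd]
      · have hε_eq : ε = 1 / 8 := by rw [hεdef, min_eq_right hδ1]
        have h7 : 7 / 8 ≤ dj j := by rw [hε_eq] at hdjlb; linarith
        have : min (dj j) 1 ≥ 7/8 := le_min h7 (by norm_num)
        have := hε_eq ▸ hjd
        linarith
    have hone : (bj j : E → ℝ) y = 1 := (bj j).one_of_mem_closedBall (mem_closedBall.mpr hrin)
    have hterm : cj j * bj j y = cj j := by rw [hone, mul_one]
    have : cj j * bj j y ≤ ∑' i, cj i * bj i y :=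
      Summable.le_tsum (hsummable y) j (fun i _ => htermnn i y)
    calc (0:ℝ) < cj j := hcjpos j
    _ = cj j * bj j y := hterm.symm
    _ ≤ _ := this

lemma exists_mollified (w : EuclideanSpace ℝ (Fin d) → ℝ) (K : ℝ≥0) (hw : LipschitzWith K w) :
    ∃ W : ℕ → EuclideanSpace ℝ (Fin d) → ℝ, (∀ k, Differentiable ℝ (W k)) ∧
      (∀ k (x y : E), |W k x - W k y| ≤ (K:ℝ) * ‖x - y‖) ∧
      (∀ k (x : E), |W k x - w x| ≤ (K:ℝ) * ((2:ℝ)^k)⁻¹) := by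
  have h2k : ∀ k : ℕ, (0:ℝ) < ((2:ℝ)^k)⁻¹ := fun k => by positivity
  set rk : ℕ → ℝ := fun k => ((2:ℝ)^k)⁻¹ with hrkdef
  set ρ : (k : ℕ) → ContDiffBump (0 : EuclideanSpace ℝ (Fin d)) :=
    fun k => ⟨rk k / 2, rk k, by linarith [h2k k], by linarith [h2k k]⟩ with hρdef
  have hwc : Continuous w := hw.continuous
  have hwloc : MeasureTheory.LocallyIntegrable w volume := hwc.locallyIntegrable
  set W : ℕ → EuclideanSpace ℝ (Fin d) → ℝ :=
    fun k => MeasureTheory.convolution ((ρ k).normed volume) w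
      (ContinuousLinearMap.lsmul ℝ ℝ) volume with hWdef
  have hWval : ∀ k (x : E), W k x = ∫ t, (ρ k).normed volume t * w (x - t) := by
    intro k x
    show MeasureTheory.convolution ((ρ k).normed volume) w
      (ContinuousLinearMap.lsmul ℝ ℝ) volume x = _
    rw [MeasureTheory.convolution_def]
    simp [ContinuousLinearMap.lsmul_apply, smul_eq_mul]
  have hρcont : ∀ k, Continuous ((ρ k).normed volume) := fun k =>
    ((ρ k).contDiff_normed (n := 1)).continuous
  have hint : ∀ k (x : E), MeasureTheory.Integrable
      (fun t => (ρ k).normed volume t * w (x - t)) volume := by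
    intro k x
    apply Continuous.integrable_of_hasCompactSupport
    · exact (hρcont k).mul (hwc.comp (continuous_const.sub continuous_id))
    · exact (HasCompactSupport.mul_right ((ρ k).hasCompactSupport_normed))
  have hintc : ∀ k (c : ℝ), MeasureTheory.Integrable
      (fun t => (ρ k).normed volume t * c) volume := fun k c =>
    ((ρ k).integrable_normed).mul_const c
  have hiρ : ∀ k, ∫ t, (ρ k).normed volume t = 1 := fun k => (ρ k).integral_normed
  have hlipw : ∀ a b : E, |w a - w b| ≤ (K:ℝ) * ‖a - b‖ := by
    intro a b
    have := hw.dist_le_mul a b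
    rwa [Real.dist_eq, dist_eq_norm] at this
  refine ⟨W, ?_, ?_, ?_⟩
  · intro k
    have : ContDiff ℝ (1:ℕ∞) (W k) :=
      HasCompactSupport.contDiff_convolution_left _ ((ρ k).hasCompactSupport_normed)
        ((ρ k).contDiff_normed (n := 1)) hwloc
    exact this.differentiable (by simp)
  · intro k x y
    rw [hWval k x, hWval k y, ← MeasureTheory.integral_sub (hint k x) (hint k y)]
    rw [← Real.norm_eq_abs]
    calc ‖∫ t, ((ρ k).normed volume t * w (x - t) - (ρ k).normed volume t * w (y - t))‖
        ≤ ∫ t, (ρ k).normed volume t * ((K:ℝ) * ‖x - y‖) := by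
          apply MeasureTheory.norm_integral_le_of_norm_le (hintc k _)
          apply Filter.Eventually.of_forall
          intro t
          rw [← mul_sub, Real.norm_eq_abs, abs_mul, abs_of_nonneg ((ρ k).nonneg_normed t)]
          apply mul_le_mul_of_nonneg_left _ ((ρ k).nonneg_normed t)
          have : x - t - (y - t) = x - y := by abel
          calc |w (x - t) - w (y - t)| ≤ (K:ℝ) * ‖x - t - (y - t)‖ := hlipw _ _
          _ = (K:ℝ) * ‖x - y‖ := by rw [this]
    _ = (K:ℝ) * ‖x - y‖ := by
          rw [MeasureTheory.integral_mul_const, hiρ k, one_mul]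
  · intro k x
    have hwx : w x = ∫ t, (ρ k).normed volume t * w x := by
      rw [MeasureTheory.integral_mul_const, hiρ k, one_mul]
    rw [hWval k x]
    nth_rewrite 1 [hwx]
    rw [← MeasureTheory.integral_sub (hint k x) (hintc k _), ← Real.norm_eq_abs]
    calc ‖∫ t, ((ρ k).normed volume t * w (x - t) - (ρ k).normed volume t * w x)‖
        ≤ ∫ t, (ρ k).normed volume t * ((K:ℝ) * rk k) := by
          apply MeasureTheory.norm_integral_le_of_norm_le (hintc k _)
          apply Filter.Eventually.of_forall
          intro t
          rw [← mul_sub, Real.norm_eq_abs, abs_mul, abs_of_nonneg ((ρ k).nonneg_normed t)]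
          by_cases ht : t ∈ Metric.ball (0:EuclideanSpace ℝ (Fin d)) (rk k)
          · apply mul_le_mul_of_nonneg_left _ ((ρ k).nonneg_normed t)
            have htn : ‖t‖ ≤ rk k := by
              have := mem_ball_zero_iff.mp ht
              linarith
            have hxs : x - t - x = -t := by abel
            calc |w (x - t) - w x| ≤ (K:ℝ) * ‖x - t - x‖ := hlipw _ _
            _ = (K:ℝ) * ‖t‖ := by rw [hxs, norm_neg]
            _ ≤ (K:ℝ) * rk k := by
                apply mul_le_mul_of_nonneg_left htn (NNReal.coe_nonneg K)
          · have h0 : (ρ k).normed volume t = 0 := by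
              have hsupp := (ρ k).support_normed_eq (μ := volume)
              by_contra hne
              exact ht (hsupp ▸ Function.mem_support.mpr hne)
            rw [h0, zero_mul, zero_mul]
    _ = (K:ℝ) * rk k := by
          rw [MeasureTheory.integral_mul_const, hiρ k, one_mul]

lemma exists_glue (C : Set (EuclideanSpace ℝ (Fin d))) (hC : IsClosed C)
    (w : EuclideanSpace ℝ (Fin d) → ℝ) (K : ℝ≥0) (hw : LipschitzWith K w) :
    ∃ (u : EuclideanSpace ℝ (Fin d) → ℝ) (K' : ℝ≥0), LipschitzWith K' u ∧
      (∀ x, x ∉ C → DifferentiableAt ℝ u x) ∧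
      (∀ x ∈ C, DifferentiableAt ℝ (fun y => u y - w y) x) := by
  rcases C.eq_empty_or_nonempty with rfl | hCne
  · exact ⟨fun _ => 0, 0, LipschitzWith.const' 0, fun x _ => differentiableAt_const 0,
      fun x hx => absurd hx (notMem_empty x)⟩
  rcases Set.eq_empty_or_nonempty (Cᶜ) with hcc | hcc
  · refine ⟨w, K, hw, fun x hx => ?_, fun x _ => ?_⟩
    · refine absurd ?_ hx
      by_contra h
      rw [← Set.mem_compl_iff, hcc] at h
      exact notMem_empty x h
    · have : (fun y => w y - w y) = fun _ => (0:ℝ) := by funext y; ring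
      rw [this]; exact differentiableAt_const 0
  obtain ⟨s, hsLip, hsDiff, hs0le, hsle1, hsC, hsPos⟩ := exists_aux_s C hC hCne hcc
  obtain ⟨W, hWdiff, hWlip, hWerr⟩ := exists_mollified w K hw
  obtain ⟨M, hM0, hMlip⟩ := exists_auxChi_lip
  set L : ℝ := (K : ℝ) with hLdef
  have hL0 : 0 ≤ L := NNReal.coe_nonneg K
  set v : EuclideanSpace ℝ (Fin d) → ℕ → ℝ :=
    fun x k => auxTheta k (s x) * (W k x - w x) with hvdef
  set u : EuclideanSpace ℝ (Fin d) → ℝ := fun x => w x + ∑' k, v x k with hudef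
  have hsd : ∀ x y : EuclideanSpace ℝ (Fin d), |s x - s y| ≤ ‖x - y‖ := by
    intro x y
    have := hsLip.dist_le_mul x y
    rwa [Real.dist_eq, dist_eq_norm, NNReal.coe_one, one_mul] at this
  -- covers
  have hcover : ∀ x : EuclideanSpace ℝ (Fin d),
      ∃ F : Finset ℕ, F.card ≤ 3 ∧ ∀ k, v x k ≠ 0 → k ∈ F := by
    intro x
    obtain ⟨F, h1, h2⟩ := auxTheta_cover (s x) (hs0le x)
    refine ⟨F, h1, fun k hk => h2 k ?_⟩
    intro h0
    exact hk (by simp [hvdef, h0])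
  have hsummable : ∀ x : EuclideanSpace ℝ (Fin d), Summable (v x) := by
    intro x
    obtain ⟨F, _, h2⟩ := hcover x
    exact summable_of_ne_finset_zero (s := F)
      (fun k hk => by_contra fun h => hk (h2 k h))
  -- per-term error bound
  have hvbound : ∀ (x : EuclideanSpace ℝ (Fin d)) k, |v x k| ≤ 2 * L * s x := by
    intro x k
    by_cases h : auxTheta k (s x) = 0
    · simp only [hvdef, h, zero_mul, abs_zero]
      have := hs0le x
      positivity
    · have hb := auxTheta_ne_zero_bounds (hs0le x) h
      have hps : 0 < s x := by
        rcases lt_or_eq_of_le (hs0le x) with h' | h'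
        · exact h'
        · exact absurd (h'.symm ▸ auxTheta_zero k : auxTheta k (s x) = 0) h
      have h2 : ((2:ℝ)^k)⁻¹ ≤ 2 * s x := by
        have hp : (0:ℝ) < (2:ℝ)^k := by positivity
        rw [inv_le_iff_one_le_mul₀ hp]
        have hpow : (2:ℝ)^(k+1) = 2^k * 2 := pow_succ 2 k
        nlinarith [hb.1]
      calc |v x k| = |auxTheta k (s x)| * |W k x - w x| := abs_mul _ _
      _ ≤ 1 * (L * ((2:ℝ)^k)⁻¹) :=
            mul_le_mul (abs_auxTheta_le_one k (s x)) (hWerr k x) (abs_nonneg _) zero_le_one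
      _ = L * ((2:ℝ)^k)⁻¹ := one_mul _
      _ ≤ L * (2 * s x) := mul_le_mul_of_nonneg_left h2 hL0
      _ = 2 * L * s x := by ring
  -- global error bound
  have herr : ∀ x : EuclideanSpace ℝ (Fin d), |u x - w x| ≤ 6 * L * s x := by
    intro x
    obtain ⟨F, hFcard, hFmem⟩ := hcover x
    have h1 : u x - w x = ∑' k, v x k := by simp [hudef]
    rw [h1]
    calc |∑' k, v x k| ≤ F.card * (2 * L * s x) :=
          abs_tsum_le_of_support (fun k hk => by_contra fun h => hk (hFmem k h)) (hvbound x)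
    _ ≤ 3 * (2 * L * s x) := by
          apply mul_le_mul_of_nonneg_right _ (by have := hs0le x; positivity)
          exact_mod_cast hFcard
    _ = 6 * L * s x := by ring
  -- Lipschitz bound
  have hulip : ∀ x y : EuclideanSpace ℝ (Fin d),
      |u x - u y| ≤ (L + 6 * (3 * M * L + 2 * L)) * ‖x - y‖ := by
    intro x y
    set D := ‖x - y‖ with hDdef
    have hD0 : 0 ≤ D := norm_nonneg _
    have hwxy : |w x - w y| ≤ L * D := by
      have := hw.dist_le_mul x y
      rwa [Real.dist_eq, dist_eq_norm] at this
    have hterm : ∀ k, |v x k - v y k| ≤ (3 * M * L + 2 * L) * D := by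
      intro k
      have split : v x k - v y k =
          (auxTheta k (s x) - auxTheta k (s y)) * (W k x - w x)
          + auxTheta k (s y) * ((W k x - W k y) - (w x - w y)) := by
        simp only [hvdef]; ring
      have hb1 : |(auxTheta k (s x) - auxTheta k (s y)) * (W k x - w x)| ≤ 3 * M * L * D := by
        rw [abs_mul]
        have hth : |auxTheta k (s x) - auxTheta k (s y)| ≤ 3 * M * ((2:ℝ)^k * D) := by
          have e1 : auxTheta k (s x) - auxTheta k (s y) =
              (auxChi ((2:ℝ)^k * s x) - auxChi ((2:ℝ)^k * s y))
              - (auxChi ((2:ℝ)^(k+1) * s x) - auxChi ((2:ℝ)^(k+1) * s y)) := by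
            simp only [auxTheta]; ring
          have h1 := hMlip ((2:ℝ)^k * s x) ((2:ℝ)^k * s y)
          have h2 := hMlip ((2:ℝ)^(k+1) * s x) ((2:ℝ)^(k+1) * s y)
          have e2 : |(2:ℝ)^k * s x - (2:ℝ)^k * s y| = (2:ℝ)^k * |s x - s y| := by
            rw [← mul_sub, abs_mul, abs_of_nonneg (by positivity : (0:ℝ) ≤ (2:ℝ)^k)]
          have e3 : |(2:ℝ)^(k+1) * s x - (2:ℝ)^(k+1) * s y|
              = (2:ℝ)^(k+1) * |s x - s y| := by
            rw [← mul_sub, abs_mul, abs_of_nonneg (by positivity : (0:ℝ) ≤ (2:ℝ)^(k+1))]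
          rw [e2] at h1; rw [e3] at h2
          have hsxy := hsd x y
          have hpow : (2:ℝ)^(k+1) = 2^k * 2 := pow_succ 2 k
          have habs : 0 ≤ |s x - s y| := abs_nonneg _
          have hpk : (0:ℝ) < (2:ℝ)^k := by positivity
          calc |auxTheta k (s x) - auxTheta k (s y)|
              ≤ |auxChi ((2:ℝ)^k * s x) - auxChi ((2:ℝ)^k * s y)|
                + |auxChi ((2:ℝ)^(k+1) * s x) - auxChi ((2:ℝ)^(k+1) * s y)| := by
                rw [e1]; exact abs_sub _ _
          _ ≤ M * ((2:ℝ)^k * |s x - s y|) + M * ((2:ℝ)^(k+1) * |s x - s y|) := add_le_add h1 h2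
          _ = 3 * M * ((2:ℝ)^k * |s x - s y|) := by rw [hpow]; ring
          _ ≤ 3 * M * ((2:ℝ)^k * D) := by
                have h4 : (2:ℝ)^k * |s x - s y| ≤ (2:ℝ)^k * D :=
                  mul_le_mul_of_nonneg_left hsxy hpk.le
                exact mul_le_mul_of_nonneg_left h4 (by positivity)
        have hWw : |W k x - w x| ≤ L * ((2:ℝ)^k)⁻¹ := hWerr k x
        have hpk : (0:ℝ) < (2:ℝ)^k := by positivity
        calc |auxTheta k (s x) - auxTheta k (s y)| * |W k x - w x|
            ≤ (3 * M * ((2:ℝ)^k * D)) * (L * ((2:ℝ)^k)⁻¹) := by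
              apply mul_le_mul hth hWw (abs_nonneg _) (by positivity)
        _ = 3 * M * L * D * ((2:ℝ)^k * ((2:ℝ)^k)⁻¹) := by ring
        _ = 3 * M * L * D := by rw [mul_inv_cancel₀ hpk.ne', mul_one]
      have hb2 : |auxTheta k (s y) * ((W k x - W k y) - (w x - w y))| ≤ 2 * L * D := by
        rw [abs_mul]
        have h1 : |(W k x - W k y) - (w x - w y)| ≤ L * D + L * D := by
          calc |(W k x - W k y) - (w x - w y)| ≤ |W k x - W k y| + |w x - w y| := abs_sub _ _
          _ ≤ L * D + L * D := add_le_add (hWlip k x y) hwxy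
        calc |auxTheta k (s y)| * |(W k x - W k y) - (w x - w y)|
            ≤ 1 * (L * D + L * D) := by
              apply mul_le_mul (abs_auxTheta_le_one k (s y)) h1 (abs_nonneg _) zero_le_one
        _ = 2 * L * D := by ring
      calc |v x k - v y k| ≤ |(auxTheta k (s x) - auxTheta k (s y)) * (W k x - w x)|
            + |auxTheta k (s y) * ((W k x - W k y) - (w x - w y))| := by
            rw [split]; exact abs_add_le _ _
      _ ≤ 3 * M * L * D + 2 * L * D := add_le_add hb1 hb2
      _ = (3 * M * L + 2 * L) * D := by ring
    obtain ⟨Fx, hFxcard, hFxmem⟩ := hcover x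
    obtain ⟨Fy, hFycard, hFymem⟩ := hcover y
    have hF : ∀ k ∉ Fx ∪ Fy, v x k - v y k = 0 := by
      intro k hk
      simp only [Finset.mem_union, not_or] at hk
      have h1 : v x k = 0 := by_contra fun h => hk.1 (hFxmem k h)
      have h2 : v y k = 0 := by_contra fun h => hk.2 (hFymem k h)
      rw [h1, h2, sub_zero]
    have hcardF : ((Fx ∪ Fy).card : ℝ) ≤ 6 := by
      have := Finset.card_union_le Fx Fy
      have h6 : (Fx ∪ Fy).card ≤ 6 := le_trans this (by omega)
      exact_mod_cast h6
    have huxy : u x - u y = (w x - w y) + ∑' k, (v x k - v y k) := by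
      simp only [hudef]
      rw [Summable.tsum_sub (hsummable x) (hsummable y)]
      ring
    have hB0 : 0 ≤ (3 * M * L + 2 * L) * D := by positivity
    calc |u x - u y| ≤ |w x - w y| + |∑' k, (v x k - v y k)| := by
          rw [huxy]; exact abs_add_le _ _
    _ ≤ L * D + ((Fx ∪ Fy).card : ℝ) * ((3 * M * L + 2 * L) * D) :=
          add_le_add hwxy (abs_tsum_le_of_support hF hterm)
    _ ≤ L * D + 6 * ((3 * M * L + 2 * L) * D) :=
          add_le_add (le_refl _) (mul_le_mul_of_nonneg_right hcardF hB0)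
    _ = (L + 6 * (3 * M * L + 2 * L)) * D := by ring
  refine ⟨u, Real.toNNReal (L + 6 * (3 * M * L + 2 * L)), ?_, ?_, ?_⟩
  · apply LipschitzWith.of_dist_le_mul
    intro x y
    rw [Real.dist_eq, dist_eq_norm,
      Real.coe_toNNReal _ (by positivity : (0:ℝ) ≤ L + 6 * (3 * M * L + 2 * L))]
    exact hulip x y
  · -- differentiable off C
    intro x₀ hx₀
    have ht₀ : 0 < s x₀ := hsPos x₀ hx₀
    obtain ⟨N, hN⟩ := pow_unbounded_of_one_lt (s x₀)⁻¹ (by norm_num : (1:ℝ) < 2)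
    have hN' : ((2:ℝ)^N)⁻¹ < s x₀ := by
      rw [inv_lt_comm₀ (by positivity) ht₀] at *
      exact hN
    set U := {x : EuclideanSpace ℝ (Fin d) | ((2:ℝ)^N)⁻¹ < s x} with hUdef
    have hUopen : IsOpen U := isOpen_lt continuous_const hsLip.continuous
    have hx₀U : x₀ ∈ U := hN'
    have hUeq : ∀ x ∈ U, u x = ∑ k ∈ Finset.range (N+1), auxTheta k (s x) * W k x := by
      intro x hx
      have hxI : ((2:ℝ)^N)⁻¹ < s x := hx
      have hxpos : (0:ℝ) < s x := lt_trans (by positivity) hxI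
      have hsx2 : (2:ℝ) ≤ (2:ℝ)^(N+1) * s x := by
        have h1 : (2:ℝ)^(N+1) = 2^N * 2 := pow_succ 2 N
        have h2 : (0:ℝ) < (2:ℝ)^N := by positivity
        rw [inv_lt_iff_one_lt_mul₀ h2] at hxI
        nlinarith
      have htail : ∀ k ∉ Finset.range (N+1), v x k = 0 := by
        intro k hk
        simp only [Finset.mem_range, not_lt] at hk
        have hmono : (2:ℝ)^(N+1) ≤ (2:ℝ)^k := pow_le_pow_right₀ one_le_two hk
        have h2k : (2:ℝ) ≤ (2:ℝ)^k * s x := by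
          calc (2:ℝ) ≤ (2:ℝ)^(N+1) * s x := hsx2
          _ ≤ (2:ℝ)^k * s x := mul_le_mul_of_nonneg_right hmono hxpos.le
        have h2k1 : (2:ℝ) ≤ (2:ℝ)^(k+1) * s x := by
          have : (2:ℝ)^k ≤ (2:ℝ)^(k+1) := pow_le_pow_right₀ one_le_two (Nat.le_succ k)
          calc (2:ℝ) ≤ (2:ℝ)^k * s x := h2k
          _ ≤ (2:ℝ)^(k+1) * s x := mul_le_mul_of_nonneg_right this hxpos.le
        have : auxTheta k (s x) = 0 := by
          simp only [auxTheta, auxChi_of_two_le h2k, auxChi_of_two_le h2k1, sub_zero]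
        simp [hvdef, this]
      have hsum1 : ∑ k ∈ Finset.range (N+1), auxTheta k (s x) = 1 := by
        rw [auxTheta_sum]
        rw [auxChi_of_le_one (hsle1 x), auxChi_of_two_le hsx2, sub_zero]
      have hexp : ∑ k ∈ Finset.range (N+1), v x k
          = (∑ k ∈ Finset.range (N+1), auxTheta k (s x) * W k x)
            - (∑ k ∈ Finset.range (N+1), auxTheta k (s x)) * w x := by
        rw [Finset.sum_mul, ← Finset.sum_sub_distrib]
        apply Finset.sum_congr rfl
        intro k _
        simp only [hvdef]; ring
      calc u x = w x + ∑' k, v x k := rfl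
      _ = w x + ∑ k ∈ Finset.range (N+1), v x k := by rw [tsum_eq_sum htail]
      _ = ∑ k ∈ Finset.range (N+1), auxTheta k (s x) * W k x := by
            rw [hexp, hsum1]; ring
    have hdiff_sum : DifferentiableAt ℝ
        (fun x => ∑ k ∈ Finset.range (N+1), auxTheta k (s x) * W k x) x₀ := by
      apply DifferentiableAt.fun_sum
      intro k _
      apply DifferentiableAt.mul
      · have h1 : DifferentiableAt ℝ (fun x => auxChi ((2:ℝ)^k * s x)) x₀ :=
          (auxChi_differentiable _).comp x₀ ((hsDiff x₀).const_mul _)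
        have h2 : DifferentiableAt ℝ (fun x => auxChi ((2:ℝ)^(k+1) * s x)) x₀ :=
          (auxChi_differentiable _).comp x₀ ((hsDiff x₀).const_mul _)
        exact (h1.sub h2 : _)
      · exact hWdiff k x₀
    apply hdiff_sum.congr_of_eventuallyEq
    exact Filter.eventuallyEq_of_mem (hUopen.mem_nhds hx₀U) (fun x hx => hUeq x hx)
  · -- u - w differentiable on C
    intro x₀ hx₀
    have hs0 : s x₀ = 0 := hsC x₀ hx₀
    have hmin : IsLocalMin s x₀ := Filter.Eventually.of_forall (fun y => hs0 ▸ hs0le y)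
    have hfs : HasFDerivAt s (0 : EuclideanSpace ℝ (Fin d) →L[ℝ] ℝ) x₀ := by
      have h := (hsDiff x₀).hasFDerivAt
      rwa [hmin.fderiv_eq_zero] at h
    have hso : (fun y => s y) =o[nhds x₀] fun y => y - x₀ := by
      have h := hfs.isLittleO
      simpa [hs0] using h
    have hex0 : u x₀ - w x₀ = 0 := by
      have : ∀ k, v x₀ k = 0 := fun k => by
        simp [hvdef, hs0, auxTheta_zero]
      simp [hudef, this]
    have hbigO : (fun y => u y - w y) =O[nhds x₀] (fun y => s y) := by
      apply Asymptotics.IsBigO.of_bound (6 * L)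
      apply Filter.Eventually.of_forall
      intro y
      rw [Real.norm_eq_abs, Real.norm_eq_abs, abs_of_nonneg (hs0le y)]
      exact herr y
    have hlo : (fun y => u y - w y) =o[nhds x₀] fun y => y - x₀ :=
      hbigO.trans_isLittleO hso
    have : HasFDerivAt (fun y => u y - w y) (0 : EuclideanSpace ℝ (Fin d) →L[ℝ] ℝ) x₀ := by
      apply HasFDerivAt.of_isLittleO
      simpa [hex0] using hlo
    exact this.differentiableAt

end Glue


theorem stmt_0 (d : ℕ) (hd : 1 ≤ d) (F A : Set (EuclideanSpace ℝ (Fin d)))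
    (hF : IsUDS d F) (hA : ∃ C, IsClosed C ∧ A = F ∩ C) :
    IsUDS d A ∨ IsUDS d (F \ A) := by
  by_cases hUDS : IsUDS d A
  · left; exact hUDS
  right
  obtain ⟨C, hC, hAC⟩ := hA
  rw [IsUDS] at hUDS
  push_neg at hUDS
  obtain ⟨f, hfK, hfnd⟩ := hUDS
  obtain ⟨Kf, hKf⟩ := hfK
  intro g hgK
  obtain ⟨Kg, hKg⟩ := hgK
  have hwlip : LipschitzWith (Kf + Kg) (fun x => f x - g x) := hKf.sub hKg
  obtain ⟨u, K', huLip, huOff, huOn⟩ := exists_glue C hC (fun x => f x - g x) (Kf + Kg) hwlip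
  have hhLip : LipschitzWith (Kg + K') (fun x => g x + u x) := hKg.add huLip
  obtain ⟨x, hxF, hxd⟩ := hF (fun x => g x + u x) ⟨Kg + K', hhLip⟩
  by_cases hxC : x ∈ C
  · exfalso
    have hxA : x ∈ A := by rw [hAC]; exact ⟨hxF, hxC⟩
    have h1 : DifferentiableAt ℝ (fun y => u y - (f y - g y)) x := huOn x hxC
    have h2 : DifferentiableAt ℝ (fun y => (g y + u y) - (u y - (f y - g y))) x := hxd.sub h1
    have he : (fun y => (g y + u y) - (u y - (f y - g y))) = f := by funext y; ring
    rw [he] at h2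
    exact hfnd x hxA h2
  · have hxA : x ∉ A := fun h => hxC ((hAC ▸ h : x ∈ F ∩ C)).2
    refine ⟨x, ⟨hxF, hxA⟩, ?_⟩
    have h1 : DifferentiableAt ℝ u x := huOff x hxC
    have h2 : DifferentiableAt ℝ (fun y => (g y + u y) - u y) x := hxd.sub h1
    have he : (fun y => (g y + u y) - u y) = g := by funext y; ring
    rwa [he] at h2
end

section
/- Let d ≥ 1 be an integer, let F ⊆ ℝ^d and let A be a relatively closed subset of F. Then there exists a countable collection {U_i}_{i=1}^∞ of boxes in ℝ^d with pairwise disjoint interiors such that F ∩ ⋃_{i=1}^∞ U_i = F \ A and diam(U_i)/dist(U_i, A) → 0 as i → ∞ (with the convention dist(U, ∅) = 1). Furthermore, if {V_i}_{i=1}^∞ is any collection of boxes with pairwise disjoint interiors satisfying F \ A ⊆ F ∩ ⋃_{i=1}^∞ V_i, then the collection {U_i}_{i=1}^∞ can be chosen so that for each index i there exists an index j with U_i ⊆ V_j. -/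
open Metric Set Filter

namespace Stmt6Aux


noncomputable def cLen (n : ℕ) : ℝ := ((2:ℝ)^n)⁻¹

lemma cLen_pos (n : ℕ) : 0 < cLen n := by
  rw [cLen]; positivity

lemma cLen_le_one (n : ℕ) : cLen n ≤ 1 := by
  rw [cLen, inv_le_one_iff₀]; right; exact one_le_pow₀ (by norm_num)

lemma cLen_anti {n m : ℕ} (h : n ≤ m) : cLen m ≤ cLen n := by
  apply inv_anti₀ (by positivity)
  exact pow_le_pow_right₀ (by norm_num) h

def dcube (d n : ℕ) (k : Fin d → ℤ) : Set (EuclideanSpace ℝ (Fin d)) :=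
  {x | ∀ i, x i ∈ Set.Icc ((k i : ℝ) * cLen n) (((k i : ℝ) + 1) * cLen n)}

def obox (d n : ℕ) (k : Fin d → ℤ) : Set (EuclideanSpace ℝ (Fin d)) :=
  {x | ∀ i, x i ∈ Set.Ioo ((k i : ℝ) * cLen n) (((k i : ℝ) + 1) * cLen n)}

lemma isBox_dcube (d n : ℕ) (k : Fin d → ℤ) : IsBox d (dcube d n k) :=
  ⟨fun i => (k i : ℝ) * cLen n, fun i => ((k i : ℝ) + 1) * cLen n, rfl⟩

lemma isBox_empty {d : ℕ} (hd : 1 ≤ d) : IsBox d (∅ : Set (EuclideanSpace ℝ (Fin d))) := by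
  refine ⟨fun _ => 1, fun _ => 0, ?_⟩
  ext x
  simp only [Set.mem_empty_iff_false, Set.mem_setOf_eq, false_iff, not_forall]
  exact ⟨⟨0, hd⟩, by simp⟩

lemma isBox_inter {d : ℕ} {U V : Set (EuclideanSpace ℝ (Fin d))}
    (hU : IsBox d U) (hV : IsBox d V) : IsBox d (U ∩ V) := by
  obtain ⟨a, b, rfl⟩ := hU
  obtain ⟨a', b', rfl⟩ := hV
  refine ⟨fun i => max (a i) (a' i), fun i => min (b i) (b' i), ?_⟩
  ext x
  simp only [Set.mem_inter_iff, Set.mem_setOf_eq, Set.mem_Icc, max_le_iff, le_min_iff]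
  exact ⟨fun h i => ⟨⟨(h.1 i).1, (h.2 i).1⟩, (h.1 i).2, (h.2 i).2⟩,
    fun h => ⟨fun i => ⟨(h i).1.1, (h i).2.1⟩, fun i => ⟨(h i).1.2, (h i).2.2⟩⟩⟩

/-- A point of the interior of a box has all coordinates strictly inside. -/
lemma interior_box_subset {d : ℕ} (a b : Fin d → ℝ) :
    interior {x : EuclideanSpace ℝ (Fin d) | ∀ i, x i ∈ Set.Icc (a i) (b i)} ⊆
      {x : EuclideanSpace ℝ (Fin d) | ∀ i, x i ∈ Set.Ioo (a i) (b i)} := by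
  intro x hx i
  rw [mem_interior_iff_mem_nhds, Metric.mem_nhds_iff] at hx
  obtain ⟨ε, hε, hball⟩ := hx
  have hx0 : x ∈ {x : EuclideanSpace ℝ (Fin d) | ∀ i, x i ∈ Set.Icc (a i) (b i)} :=
    hball (Metric.mem_ball_self hε)
  have hplus : x + EuclideanSpace.single i (ε/2) ∈
      {x : EuclideanSpace ℝ (Fin d) | ∀ i, x i ∈ Set.Icc (a i) (b i)} := by
    apply hball
    rw [Metric.mem_ball, dist_eq_norm]
    simp only [add_sub_cancel_left]
    rw [EuclideanSpace.norm_single]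
    rw [Real.norm_eq_abs, abs_of_pos (by linarith)]
    linarith
  have hminus : x - EuclideanSpace.single i (ε/2) ∈
      {x : EuclideanSpace ℝ (Fin d) | ∀ i, x i ∈ Set.Icc (a i) (b i)} := by
    apply hball
    rw [Metric.mem_ball, dist_eq_norm]
    simp only [sub_sub_cancel_left, norm_neg]
    rw [EuclideanSpace.norm_single]
    rw [Real.norm_eq_abs, abs_of_pos (by linarith)]
    linarith
  have h1 := (hplus i).2
  have h2 := (hminus i).1
  have e1 : (x + EuclideanSpace.single i (ε/2)) i = x i + ε/2 := by
    rw [PiLp.add_apply, EuclideanSpace.single_apply]; simp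
  have e2 : (x - EuclideanSpace.single i (ε/2)) i = x i - ε/2 := by
    rw [PiLp.sub_apply, EuclideanSpace.single_apply]; simp
  rw [e1] at h1
  rw [e2] at h2
  constructor <;> [linarith [(hx0 i).1]; linarith [(hx0 i).2]]

lemma interior_dcube_subset (d n : ℕ) (k : Fin d → ℤ) :
    interior (dcube d n k) ⊆ obox d n k :=
  interior_box_subset _ _



lemma two_pow_mul_cLen {e n m : ℕ} (h : e + n = m) : (2:ℝ)^e * cLen m = cLen n := by
  rw [cLen, cLen, ← h, pow_add]
  field_simp

/-- Real intervals at scales n ≤ m whose interiors meet: the finer index determines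
the coarser one by division. -/
lemma ioo_nesting {n m : ℕ} (hnm : n ≤ m) {k l : ℤ} {x : ℝ}
    (h1 : x ∈ Set.Ioo ((k:ℝ) * cLen n) (((k:ℝ)+1) * cLen n))
    (h2 : x ∈ Set.Ioo ((l:ℝ) * cLen m) (((l:ℝ)+1) * cLen m)) :
    l / (2^(m-n) : ℤ) = k := by
  set e := m - n with he
  have hem : e + n = m := by omega
  have hpow : (2:ℝ)^e * cLen m = cLen n := two_pow_mul_cLen hem
  -- k * 2^e ≤ l and l < (k+1) * 2^e
  have hc := cLen_pos m
  have hb1 : (k:ℝ) * 2^e < (l:ℝ) + 1 := by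
    have h' : (k:ℝ) * cLen n < ((l:ℝ)+1) * cLen m := lt_of_le_of_lt (le_of_lt h1.1) h2.2
    have h'' : (k:ℝ) * 2^e * cLen m < ((l:ℝ)+1) * cLen m := by
      rw [mul_assoc, hpow]; exact h'
    exact lt_of_mul_lt_mul_right h'' hc.le
  have hb2 : (l:ℝ) < ((k:ℝ)+1) * 2^e := by
    have h' : (l:ℝ) * cLen m < ((k:ℝ)+1) * cLen n := lt_of_le_of_lt (le_of_lt h2.1) h1.2
    have h'' : (l:ℝ) * cLen m < ((k:ℝ)+1) * 2^e * cLen m := by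
      rw [mul_assoc, hpow]; exact h'
    exact lt_of_mul_lt_mul_right h'' hc.le
  have hi1 : k * 2^e ≤ l := by
    have hr : ((k * 2^e : ℤ) : ℝ) < ((l + 1 : ℤ):ℝ) := by push_cast; linarith
    have := (by exact_mod_cast hr : (k * 2^e : ℤ) < l + 1)
    omega
  have hi2 : l < (k+1) * 2^e := by
    have hr : ((l:ℤ):ℝ) < (((k+1) * 2^e : ℤ) : ℝ) := by push_cast; linarith
    exact_mod_cast hr
  -- now l = k * 2^e + r with 0 ≤ r < 2^e
  have hbpos : (0:ℤ) < 2^e := by positivity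
  have : l / (2^e : ℤ) = k := by
    have h := Int.ediv_emod_unique (a := l) (b := 2^e) (q := k) (r := l - k * 2^e) hbpos
    exact (h.mpr ⟨by ring, by omega, by nlinarith⟩).1
  simpa [he] using this

lemma ediv_nesting_subset {n m : ℕ} (hnm : n ≤ m) {k l : ℤ}
    (h : l / (2^(m-n) : ℤ) = k) :
    Set.Icc ((l:ℝ) * cLen m) (((l:ℝ)+1) * cLen m) ⊆
      Set.Icc ((k:ℝ) * cLen n) (((k:ℝ)+1) * cLen n) := by
  set e := m - n with he
  have hem : e + n = m := by omega
  have hpow : (2:ℝ)^e * cLen m = cLen n := two_pow_mul_cLen hem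
  have hbpos : (0:ℤ) < 2^e := by positivity
  have h1 : k * 2^e ≤ l := by
    have heq := Int.mul_ediv_add_emod l (2^e)
    rw [h] at heq
    have h2 := Int.emod_nonneg l (ne_of_gt hbpos)
    nlinarith
  have h2 : l + 1 ≤ (k+1) * 2^e := by
    have heq := Int.mul_ediv_add_emod l (2^e)
    rw [h] at heq
    have h3 := Int.emod_lt_of_pos l hbpos
    nlinarith
  intro x hx
  have hcm := cLen_pos m
  have hr1 : ((k:ℝ) * 2^e) * cLen m ≤ (l:ℝ) * cLen m := by
    have : ((k * 2^e : ℤ) : ℝ) ≤ (l : ℝ) := by exact_mod_cast h1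
    push_cast at this ⊢
    nlinarith
  have hr2 : ((l:ℝ)+1) * cLen m ≤ (((k:ℝ)+1) * 2^e) * cLen m := by
    have : ((l + 1 : ℤ) : ℝ) ≤ (((k+1) * 2^e : ℤ) : ℝ) := by exact_mod_cast h2
    push_cast at this ⊢
    nlinarith
  constructor
  · calc (k:ℝ) * cLen n = ((k:ℝ) * 2^e) * cLen m := by rw [← hpow]; ring
    _ ≤ (l:ℝ) * cLen m := hr1
    _ ≤ x := hx.1
  · calc x ≤ ((l:ℝ)+1) * cLen m := hx.2
    _ ≤ (((k:ℝ)+1) * 2^e) * cLen m := hr2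
    _ = ((k:ℝ)+1) * cLen n := by rw [← hpow]; ring

/-- floor composition: ⌊t⌋ / b = ⌊t / b⌋ for positive integer b -/
lemma floor_ediv (t : ℝ) {b : ℤ} (hb : 0 < b) : ⌊t⌋ / b = ⌊t / (b:ℝ)⌋ := by
  symm
  rw [Int.floor_eq_iff]
  · have hbr : (0:ℝ) < (b:ℝ) := by exact_mod_cast hb
    have h1 : (⌊t⌋ / b) * b ≤ ⌊t⌋ := Int.ediv_mul_le ⌊t⌋ (ne_of_gt hb)
    have h2 : ⌊t⌋ < (⌊t⌋ / b + 1) * b := by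
      have := Int.mul_ediv_add_emod ⌊t⌋ b
      have h3 := Int.emod_lt_of_pos ⌊t⌋ hb
      nlinarith
    constructor
    · rw [le_div_iff₀ hbr]
      calc ((⌊t⌋/b : ℤ):ℝ) * b = (((⌊t⌋/b) * b : ℤ) : ℝ) := by push_cast; ring
      _ ≤ (⌊t⌋ : ℝ) := by exact_mod_cast h1
      _ ≤ t := Int.floor_le t
    · rw [div_lt_iff₀ hbr]
      calc t < (⌊t⌋ : ℝ) + 1 := Int.lt_floor_add_one t
      _ ≤ (((⌊t⌋/b : ℤ)) + 1 : ℝ) * b := by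
          have h4 : (⌊t⌋ + 1 : ℤ) ≤ (⌊t⌋/b + 1) * b := Int.add_one_le_iff.mpr h2
          have h5 : ((⌊t⌋ + 1 : ℤ) : ℝ) ≤ (((⌊t⌋/b + 1) * b : ℤ) : ℝ) := by exact_mod_cast h4
          push_cast at h5
          linarith
lemma dist_le_of_mem_dcube {d n : ℕ} {k : Fin d → ℤ}
    {x y : EuclideanSpace ℝ (Fin d)} (hx : x ∈ dcube d n k) (hy : y ∈ dcube d n k) :
    dist x y ≤ Real.sqrt d * cLen n := by
  rw [EuclideanSpace.dist_eq]
  have key : ∀ i, dist (x i) (y i) ^ 2 ≤ (cLen n)^2 := by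
    intro i
    have h := Real.dist_le_of_mem_Icc (hx i) (hy i)
    have h2 : ((k i : ℝ) + 1) * cLen n - (k i : ℝ) * cLen n = cLen n := by ring
    rw [h2] at h
    have := dist_nonneg (x := x i) (y := y i)
    nlinarith
  calc Real.sqrt (∑ i, dist (x i) (y i) ^ 2) ≤ Real.sqrt (∑ _i : Fin d, (cLen n)^2) := by
        apply Real.sqrt_le_sqrt
        exact Finset.sum_le_sum fun i _ => key i
  _ = Real.sqrt d * cLen n := by
        rw [Finset.sum_const, Finset.card_univ, Fintype.card_fin, nsmul_eq_mul]
        rw [Real.sqrt_mul (by positivity), Real.sqrt_sq (le_of_lt (cLen_pos n))]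

lemma diam_dcube_le (d n : ℕ) (k : Fin d → ℤ) :
    Metric.diam (dcube d n k) ≤ Real.sqrt d * cLen n :=
  Metric.diam_le_of_forall_dist_le
    (mul_nonneg (Real.sqrt_nonneg _) (le_of_lt (cLen_pos n)))
    fun x hx y hy => dist_le_of_mem_dcube hx hy

lemma abs_coord_le_norm {d : ℕ} (x : EuclideanSpace ℝ (Fin d)) (i : Fin d) :
    |x i| ≤ ‖x‖ := by
  rw [EuclideanSpace.norm_eq]
  have : |x i| = Real.sqrt (‖x i‖^2) := by
    rw [Real.sqrt_sq_eq_abs, Real.norm_eq_abs, abs_abs]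
  rw [this]
  apply Real.sqrt_le_sqrt
  exact Finset.single_le_sum (f := fun j => ‖x j‖^2) (fun j _ => by positivity)
    (Finset.mem_univ i)

lemma mem_dcube_floor {d : ℕ} (x : EuclideanSpace ℝ (Fin d)) (n : ℕ) :
    x ∈ dcube d n (fun i => ⌊x i * 2^n⌋) := by
  intro i
  have h2 : (0:ℝ) < 2^n := by positivity
  constructor
  · rw [cLen, ← div_eq_mul_inv, div_le_iff₀ h2]
    exact Int.floor_le (x i * 2^n)
  · rw [cLen, ← div_eq_mul_inv, le_div_iff₀ h2]
    exact le_of_lt (Int.lt_floor_add_one (x i * 2^n))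

/-- The corner of a dyadic cube, as a Euclidean point. -/
noncomputable def corner (d n : ℕ) (k : Fin d → ℤ) : EuclideanSpace ℝ (Fin d) :=
  (WithLp.equiv 2 (Fin d → ℝ)).symm (fun i => (k i : ℝ) * cLen n)

lemma corner_mem (d n : ℕ) (k : Fin d → ℤ) : corner d n k ∈ dcube d n k := by
  intro i
  rw [corner, WithLp.equiv_symm_apply, PiLp.toLp_apply]
  exact ⟨le_refl _, by nlinarith [cLen_pos n]⟩

variable {d : ℕ} {C : Set (EuclideanSpace ℝ (Fin d))}

def good (d : ℕ) (C : Set (EuclideanSpace ℝ (Fin d))) (n : ℕ) (k : Fin d → ℤ) : Prop :=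
  (∀ x ∈ dcube d n k, ∀ y ∈ C, ((n:ℝ)+2) * Real.sqrt d * cLen n ≤ dist x y) ∧
  ∀ x ∈ dcube d n k, ‖x‖ ≤ 2^n

def anc {d : ℕ} (n : ℕ) (k : Fin d → ℤ) (m : ℕ) : Fin d → ℤ :=
  fun i => k i / (2^(n-m) : ℤ)

def sel (d : ℕ) (C : Set (EuclideanSpace ℝ (Fin d))) (n : ℕ) (k : Fin d → ℤ) : Prop :=
  good d C n k ∧ ∀ m < n, ¬ good d C m (anc n k m)

lemma exists_good (hC : IsClosed C) {x : EuclideanSpace ℝ (Fin d)} (hx : x ∉ C) :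
    ∃ n, good d C n (fun i => ⌊x i * 2^n⌋) := by
  -- the positive "clearance"
  obtain ⟨δ, hδ, hdist⟩ : ∃ δ : ℝ, 0 < δ ∧ ∀ y ∈ C, δ ≤ dist x y := by
    by_cases hne : C.Nonempty
    · exact ⟨infDist x C, (hC.notMem_iff_infDist_pos hne).mp hx,
        fun y hy => infDist_le_dist_of_mem hy⟩
    · exact ⟨1, one_pos, fun y hy => absurd ⟨y, hy⟩ hne⟩
  have A1 : Tendsto (fun n : ℕ => ((n:ℝ)+3) * Real.sqrt d * cLen n) atTop (nhds 0) := by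
    have h1 : Tendsto (fun n : ℕ => (n:ℝ)/2^n) atTop (nhds 0) := by
      simpa using tendsto_pow_const_div_const_pow_of_one_lt 1 (by norm_num : (1:ℝ) < 2)
    have h2 : Tendsto (fun n : ℕ => ((1:ℝ)/2)^n) atTop (nhds 0) :=
      tendsto_pow_atTop_nhds_zero_of_lt_one (by norm_num) (by norm_num)
    have := (h1.const_mul (Real.sqrt d)).add (h2.const_mul (3 * Real.sqrt d))
    simp only [mul_zero, add_zero] at this
    convert this using 2 with n
    rw [cLen]
    field_simp
    have h12 : ((1:ℝ)/2)^n * 2^n = 1 := by rw [← mul_pow]; norm_num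
    linear_combination (-(Real.sqrt d * 3)) * h12
  have A2 : Tendsto (fun n : ℕ => (2:ℝ)^n) atTop atTop :=
    tendsto_pow_atTop_atTop_of_one_lt (by norm_num)
  have E1 : ∀ᶠ n : ℕ in atTop, ((n:ℝ)+3) * Real.sqrt d * cLen n < δ :=
    A1.eventually_lt_const hδ
  have E2 : ∀ᶠ n : ℕ in atTop, ‖x‖ + Real.sqrt d ≤ (2:ℝ)^n :=
    A2.eventually_ge_atTop _
  obtain ⟨n, hn1, hn2⟩ := (E1.and E2).exists
  refine ⟨n, ?_, ?_⟩
  · intro y hy z hz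
    have hxy : dist x y ≤ Real.sqrt d * cLen n :=
      dist_le_of_mem_dcube (mem_dcube_floor x n) hy
    have hxz : δ ≤ dist x z := hdist z hz
    have htri : dist x z ≤ dist x y + dist y z := dist_triangle x y z
    nlinarith [cLen_pos n]
  · intro y hy
    have hxy : dist x y ≤ Real.sqrt d * cLen n :=
      dist_le_of_mem_dcube (mem_dcube_floor x n) hy
    have h1 : ‖y‖ ≤ ‖x‖ + dist x y := by
      rw [dist_comm, dist_eq_norm]
      have := norm_sub_norm_le y x
      linarith [abs_le.mp (abs_norm_sub_norm_le y x)]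
    have h2 : Real.sqrt d * cLen n ≤ Real.sqrt d := by
      nlinarith [cLen_le_one n, Real.sqrt_nonneg (d:ℝ), cLen_pos n]
    linarith

lemma anc_floor (x : ℝ) {m n : ℕ} (hmn : m ≤ n) :
    ⌊x * 2^n⌋ / (2^(n-m) : ℤ) = ⌊x * 2^m⌋ := by
  have hb : (0:ℤ) < 2^(n-m) := by positivity
  rw [floor_ediv _ hb]
  congr 1
  push_cast
  rw [div_eq_iff (by positivity : ((2:ℝ)^(n-m)) ≠ 0)]
  have hmm : m + (n - m) = n := by omega
  rw [mul_assoc, ← pow_add, hmm]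

lemma exists_sel (hC : IsClosed C) {x : EuclideanSpace ℝ (Fin d)} (hx : x ∉ C) :
    ∃ n k, sel d C n k ∧ x ∈ dcube d n k := by
  classical
  have hex := exists_good hC hx
  set n₀ := Nat.find hex with hn₀
  refine ⟨n₀, fun i => ⌊x i * 2^n₀⌋, ⟨Nat.find_spec hex, ?_⟩, mem_dcube_floor x n₀⟩
  intro m hm hgood
  have : anc n₀ (fun i => ⌊x i * 2^n₀⌋) m = fun i => ⌊x i * 2^m⌋ := by
    funext i
    exact anc_floor (x i) (le_of_lt hm)
  rw [this] at hgood
  exact Nat.find_min hex hm hgood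

lemma sel_disjoint_aux {n m : ℕ} {k l : Fin d → ℤ} (hnm : n ≤ m)
    (h1 : sel d C n k) (h2 : sel d C m l) (hne : ¬(n = m ∧ k = l)) :
    Disjoint (obox d n k) (obox d m l) := by
  rw [Set.disjoint_left]
  intro x hxk hxl
  have hanc : ∀ i, l i / (2^(m-n) : ℤ) = k i := fun i => ioo_nesting hnm (hxk i) (hxl i)
  rcases eq_or_lt_of_le hnm with heq | hlt
  · subst heq
    refine hne ⟨rfl, funext fun i => ?_⟩
    have := hanc i
    simpa using this.symm
  · exact h2.2 n hlt (by
      have : anc m l n = k := funext hanc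
      rw [this]
      exact h1.1)

lemma sel_disjoint {n m : ℕ} {k l : Fin d → ℤ}
    (h1 : sel d C n k) (h2 : sel d C m l) (hne : ¬(n = m ∧ k = l)) :
    Disjoint (obox d n k) (obox d m l) := by
  rcases le_total n m with h | h
  · exact sel_disjoint_aux h h1 h2 hne
  · exact (sel_disjoint_aux h h2 h1 (fun ⟨he, hk⟩ => hne ⟨he.symm, hk.symm⟩)).symm

lemma sel_finite (N : ℕ) :
    {p : ℕ × (Fin d → ℤ) | sel d C p.1 p.2 ∧ p.1 ≤ N}.Finite := by
  apply Set.Finite.subset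
    (Set.Finite.biUnion (Set.finite_Iic N) (fun n _ =>
      Set.Finite.prod (Set.finite_singleton n)
        (Set.Finite.pi (fun i : Fin d => Set.finite_Icc (-(4^n) : ℤ) (4^n)))))
  rintro ⟨n, k⟩ ⟨hsel, hn⟩
  refine Set.mem_biUnion hn ⟨rfl, fun i _ => ?_⟩
  have hcor := hsel.1.2 (corner d n k) (corner_mem d n k)
  have hci : |(corner d n k) i| ≤ (2:ℝ)^n := le_trans (abs_coord_le_norm _ i) hcor
  have hc : (corner d n k) i = (k i : ℝ) * cLen n := by
    rw [corner, WithLp.equiv_symm_apply, PiLp.toLp_apply]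
  rw [hc, abs_mul, abs_of_pos (cLen_pos n)] at hci
  have h4 : |(k i : ℝ)| ≤ (4:ℝ)^n := by
    have hp : (0:ℝ) < 2^n := by positivity
    have hone : cLen n * (2:ℝ)^n = 1 := by rw [cLen]; field_simp
    have key : |(k i : ℝ)| * cLen n * 2^n ≤ 2^n * 2^n :=
      mul_le_mul_of_nonneg_right hci hp.le
    have e1 : |(k i : ℝ)| * cLen n * 2^n = |(k i:ℝ)| := by
      rw [mul_assoc, hone, mul_one]
    have e2 : (2:ℝ)^n * 2^n = (4:ℝ)^n := by rw [← mul_pow]; norm_num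
    rw [e1, e2] at key
    exact key
  rw [Set.mem_Icc]
  have : |(k i : ℝ)| ≤ ((4^n : ℤ) : ℝ) := by push_cast; exact h4
  have := abs_le.mp (by exact_mod_cast this : |k i| ≤ (4^n : ℤ))
  exact this

lemma overlap_finite (g n : ℕ) (k : Fin d → ℤ) :
    {l : Fin d → ℤ | (dcube d g l ∩ dcube d n k).Nonempty}.Finite := by
  apply Set.Finite.subset
    (Set.Finite.pi (fun i : Fin d =>
      Set.finite_Icc (⌈(k i : ℝ) * cLen n * 2^g - 1⌉) (⌊((k i : ℝ) + 1) * cLen n * 2^g⌋)))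
  rintro l ⟨x, hxl, hxk⟩
  intro i _
  have h1 : (l i : ℝ) * cLen g ≤ ((k i : ℝ) + 1) * cLen n := le_trans (hxl i).1 (hxk i).2
  have h2 : (k i : ℝ) * cLen n ≤ ((l i : ℝ) + 1) * cLen g := le_trans (hxk i).1 (hxl i).2
  have hg : cLen g * (2:ℝ)^g = 1 := by rw [cLen]; field_simp
  rw [Set.mem_Icc]
  have hp : (0:ℝ) < 2^g := by positivity
  constructor
  · rw [Int.ceil_le]
    have key : (k i : ℝ) * cLen n * 2^g ≤ ((l i : ℝ) + 1) * cLen g * 2^g :=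
      mul_le_mul_of_nonneg_right h2 hp.le
    have e : ((l i : ℝ)+1) * cLen g * 2^g = (l i : ℝ) + 1 := by
      rw [mul_assoc, hg, mul_one]
    rw [e] at key
    linarith
  · rw [Int.le_floor]
    have key : (l i : ℝ) * cLen g * 2^g ≤ ((k i : ℝ) + 1) * cLen n * 2^g :=
      mul_le_mul_of_nonneg_right h1 hp.le
    have e : (l i : ℝ) * cLen g * 2^g = (l i : ℝ) := by
      rw [mul_assoc, hg, mul_one]
    rw [e] at key
    exact key

end Stmt6Aux
namespace Stmt6Aux

variable {d : ℕ}

lemma obox_same_gen_disjoint {g : ℕ} {k l : Fin d → ℤ} (h : k ≠ l) :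
    Disjoint (obox d g k) (obox d g l) := by
  rw [Set.disjoint_left]
  intro x hk hl
  apply h
  funext i
  have := ioo_nesting (le_refl g) (hk i) (hl i)
  simpa using this.symm

lemma dcube_isBounded (d n : ℕ) (k : Fin d → ℤ) :
    Bornology.IsBounded (dcube d n k) := by
  rw [Metric.isBounded_iff]
  exact ⟨Real.sqrt d * cLen n, fun x hx y hy => dist_le_of_mem_dcube hx hy⟩

lemma setDist_nonneg {α : Type*} [PseudoMetricSpace α] (A B : Set α) :
    0 ≤ setDist A B := by
  rw [setDist]
  split
  · apply Real.sInf_nonneg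
    rintro r ⟨a, _, b, _, rfl⟩
    exact dist_nonneg
  · norm_num

/-- index type of pieces -/
abbrev TIdx (d : ℕ) := ((ℕ × (Fin d → ℤ)) × ℕ) × (Fin d → ℤ)

variable (d) in
/-- the piece associated with an index -/
def piece (V : ℕ → Set (EuclideanSpace ℝ (Fin d)))
    (f₂ : (ℕ × (Fin d → ℤ)) × ℕ → ℕ) (s : TIdx d) : Set (EuclideanSpace ℝ (Fin d)) :=
  dcube d s.1.1.1 s.1.1.2 ∩ V s.1.2 ∩ dcube d (s.1.1.1 + f₂ s.1) s.2

open Classical in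
variable (d) in
noncomputable def UU (C : Set (EuclideanSpace ℝ (Fin d))) (V : ℕ → Set (EuclideanSpace ℝ (Fin d)))
    (f₂ : (ℕ × (Fin d → ℤ)) × ℕ → ℕ) (fσ : TIdx d → ℕ) (i : ℕ) :
    Set (EuclideanSpace ℝ (Fin d)) :=
  if h : ∃ s : TIdx d, sel d C s.1.1.1 s.1.1.2 ∧ fσ s = i then piece d V f₂ h.choose else ∅

lemma UU_eq {C : Set (EuclideanSpace ℝ (Fin d))} {V f₂} {fσ : TIdx d → ℕ}
    (hfσ : Function.Injective fσ) (s : TIdx d)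
    (hs : sel d C s.1.1.1 s.1.1.2) : UU d C V f₂ fσ (fσ s) = piece d V f₂ s := by
  classical
  rw [UU, dif_pos ⟨s, hs, rfl⟩]
  exact congrArg (piece d V f₂)
    (hfσ (⟨s, hs, rfl⟩ : ∃ s' : TIdx d, sel d C s'.1.1.1 s'.1.1.2 ∧ fσ s' = fσ s).choose_spec.2)

set_option maxHeartbeats 1000000 in
lemma main {d : ℕ} (hd : 1 ≤ d) (F A : Set (EuclideanSpace ℝ (Fin d)))
    (hA : ∃ C, IsClosed C ∧ A = F ∩ C)
    (V : ℕ → Set (EuclideanSpace ℝ (Fin d))) (hV1 : ∀ j, IsBox d (V j))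
    (hV2 : Pairwise fun i j => Disjoint (interior (V i)) (interior (V j)))
    (hV3 : F \ A ⊆ ⋃ j, V j) :
    ∃ U : ℕ → Set (EuclideanSpace ℝ (Fin d)),
      (∀ i, IsBox d (U i)) ∧
      (Pairwise fun i j => Disjoint (interior (U i)) (interior (U j))) ∧
      F ∩ (⋃ i, U i) = F \ A ∧
      Tendsto (fun i => Metric.diam (U i) / setDist (U i) A) atTop (nhds 0) ∧
      ∀ i, ∃ j, U i ⊆ V j := by
  classical
  set C := closure A with hC
  have hCc : IsClosed C := isClosed_closure
  have hAC : A = F ∩ C := by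
    obtain ⟨C₀, hC₀, hA₀⟩ := hA
    apply subset_antisymm
    · exact Set.subset_inter (hA₀ ▸ Set.inter_subset_left) subset_closure
    · have hsub : C ⊆ C₀ := closure_minimal (hA₀ ▸ Set.inter_subset_right) hC₀
      rw [hA₀]
      exact Set.inter_subset_inter_right F hsub
  have hsqd : 0 < Real.sqrt d := Real.sqrt_pos.mpr (by exact_mod_cast hd)
  obtain ⟨f₂, hf₂⟩ := exists_injective_nat ((ℕ × (Fin d → ℤ)) × ℕ)
  obtain ⟨fσ, hfσ⟩ := exists_injective_nat (TIdx d)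
  refine ⟨UU d C V f₂ fσ, ?_, ?_, ?_, ?_, ?_⟩
  -- boxes
  · intro i
    rw [UU]
    split
    · exact isBox_inter (isBox_inter (isBox_dcube _ _ _) (hV1 _)) (isBox_dcube _ _ _)
    · exact isBox_empty hd
  -- pairwise disjoint interiors
  · intro i i' hii
    rw [UU, UU]
    split <;> rename_i h1
    · split <;> rename_i h2
      · set s := h1.choose with hs
        set s' := h2.choose with hs'
        obtain ⟨hsel, hfi⟩ := h1.choose_spec
        obtain ⟨hsel', hfi'⟩ := h2.choose_spec
        have hss : s ≠ s' := by
          intro h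
          exact hii (by rw [← hfi, ← hfi']; exact congrArg fσ h)
        -- cases on which component differs
        by_cases hq : s.1.1 = s'.1.1
        · by_cases hj : s.1.2 = s'.1.2
          · -- k₂ differ, same generation
            have hk2 : s.2 ≠ s'.2 := by
              intro h
              exact hss (Prod.ext (Prod.ext hq hj) h)
            have hgen : s.1.1.1 + f₂ s.1 = s'.1.1.1 + f₂ s'.1 := by
              rw [show s.1 = s'.1 from Prod.ext hq hj]
            apply Disjoint.mono
              (le_trans (interior_mono Set.inter_subset_right) (interior_dcube_subset _ _ _))
              (le_trans (interior_mono Set.inter_subset_right) (interior_dcube_subset _ _ _))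
            rw [hgen]
            exact obox_same_gen_disjoint hk2
          · -- V's differ
            apply Disjoint.mono
              ((interior_mono (Set.inter_subset_left.trans Set.inter_subset_right)))
              ((interior_mono (Set.inter_subset_left.trans Set.inter_subset_right)))
            exact hV2 hj
        · -- dyadic cubes differ
          have hne : ¬(s.1.1.1 = s'.1.1.1 ∧ s.1.1.2 = s'.1.1.2) := by
            intro ⟨h1, h2⟩
            exact hq (Prod.ext h1 h2)
          apply Disjoint.mono
            (le_trans (interior_mono (Set.inter_subset_left.trans Set.inter_subset_left))
              (interior_dcube_subset _ _ _))
            (le_trans (interior_mono (Set.inter_subset_left.trans Set.inter_subset_left))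
              (interior_dcube_subset _ _ _))
          exact sel_disjoint hsel hsel' hne
      · simp
    · simp
  -- intersection
  · apply subset_antisymm
    · rintro x ⟨hxF, hxU⟩
      obtain ⟨i, hxi⟩ := Set.mem_iUnion.mp hxU
      rw [UU] at hxi
      split at hxi <;> rename_i h
      · obtain ⟨hsel, -⟩ := h.choose_spec
        refine ⟨hxF, fun hxA => ?_⟩
        have hxC : x ∈ C := subset_closure hxA
        have hbound := hsel.1.1 x hxi.1.1 x hxC
        rw [dist_self] at hbound
        have hpos : 0 < ((h.choose.1.1.1:ℝ)+2) * Real.sqrt d * cLen h.choose.1.1.1 :=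
          mul_pos (mul_pos (by positivity) hsqd) (cLen_pos _)
        linarith
      · exact absurd hxi (Set.notMem_empty x)
    · rintro x ⟨hxF, hxA⟩
      have hxC : x ∉ C := fun hxC => hxA (hAC ▸ Set.mem_inter hxF hxC)
      obtain ⟨n, k, hsel, hxcube⟩ := exists_sel hCc hxC
      obtain ⟨j, hxV⟩ := Set.mem_iUnion.mp (hV3 ⟨hxF, hxA⟩)
      refine ⟨hxF, Set.mem_iUnion.mpr
        ⟨fσ ((((n,k),j), fun i => ⌊x i * 2^(n + f₂ ((n,k),j))⌋) : TIdx d), ?_⟩⟩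
      rw [UU_eq hfσ ((((n,k),j), fun i => ⌊x i * 2^(n + f₂ ((n,k),j))⌋) : TIdx d) hsel]
      exact ⟨⟨hxcube, hxV⟩, mem_dcube_floor x (n + f₂ ((n,k),j))⟩
  -- tendsto
  · rw [Metric.tendsto_atTop]
    intro ε hε
    set M := Real.sqrt d + 1 with hM
    have hM1 : 1 ≤ M := by nlinarith [Real.sqrt_nonneg (d:ℝ)]
    have hMpos : 0 < M := by linarith
    obtain ⟨N, hN⟩ := pow_unbounded_of_one_lt (M / ε) (by norm_num : (1:ℝ) < 2)
    have hMN : M * cLen N < ε := by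
      have h2N : (0:ℝ) < 2^N := by positivity
      rw [div_lt_iff₀ hε] at hN
      rw [cLen]
      rw [mul_inv_lt_iff₀ h2N]
      linarith [hN]
    have hPfin : {p : (ℕ × (Fin d → ℤ)) × ℕ | f₂ p ≤ N}.Finite :=
      Set.Finite.preimage hf₂.injOn (Set.finite_Iic N)
    have hSfin : {s : TIdx d | sel d C s.1.1.1 s.1.1.2 ∧ (piece d V f₂ s).Nonempty ∧
        f₂ s.1 ≤ N}.Finite := by
      apply Set.Finite.subset (hPfin.biUnion (fun p _ =>
        ((overlap_finite (p.1.1 + f₂ p) p.1.1 p.1.2).image (fun l => (p, l)))))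
      rintro s ⟨hsel, ⟨x, hx⟩, hfN⟩
      exact Set.mem_biUnion (show s.1 ∈ {p | f₂ p ≤ N} from hfN)
        ⟨s.2, ⟨x, hx.2, hx.1.1⟩, Prod.mk.eta⟩
    have hIfin : (fσ '' {s : TIdx d | sel d C s.1.1.1 s.1.1.2 ∧ (piece d V f₂ s).Nonempty ∧
        f₂ s.1 ≤ N}).Finite := hSfin.image _
    obtain ⟨N₂, hN₂⟩ : ∃ N₂, ∀ i ∈ fσ '' {s : TIdx d | sel d C s.1.1.1 s.1.1.2 ∧
        (piece d V f₂ s).Nonempty ∧ f₂ s.1 ≤ N}, i < N₂ := by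
      rcases Set.Finite.bddAbove hIfin with ⟨b, hb⟩
      exact ⟨b+1, fun i hi => Nat.lt_succ_of_le (hb hi)⟩
    refine ⟨N₂, fun i hi => ?_⟩
    rw [Real.dist_eq, sub_zero,
      abs_of_nonneg (div_nonneg Metric.diam_nonneg (setDist_nonneg _ _))]
    by_cases h : ∃ s : TIdx d, sel d C s.1.1.1 s.1.1.2 ∧ fσ s = i
    · have hUU : UU d C V f₂ fσ i = piece d V f₂ h.choose := by rw [UU, dif_pos h]
      obtain ⟨hsel, hfi⟩ := h.choose_spec
      set s := h.choose with hsdef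
      rw [hUU]
      by_cases hne : (piece d V f₂ s).Nonempty
      · have hfN : N < f₂ s.1 := by
          by_contra hle
          push_neg at hle
          exact absurd (hN₂ i ⟨s, ⟨hsel, hne, hle⟩, hfi⟩) (by omega)
        set n := s.1.1.1 with hn
        set e := f₂ s.1 with he
        have hdiam : Metric.diam (piece d V f₂ s) ≤ Real.sqrt d * cLen (n + e) :=
          le_trans (Metric.diam_mono Set.inter_subset_right (dcube_isBounded d (n+e) s.2))
            (diam_dcube_le d (n+e) s.2)
        have hcLadd : cLen (n + e) = cLen n * cLen e := by
          rw [cLen, cLen, cLen, pow_add, mul_inv]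
        have hkey : Metric.diam (piece d V f₂ s) / setDist (piece d V f₂ s) A ≤
            M * cLen e := by
          by_cases hAne : A.Nonempty
          · have hsd : ((n:ℝ)+2) * Real.sqrt d * cLen n ≤ setDist (piece d V f₂ s) A := by
              rw [setDist, if_pos hAne]
              apply le_csInf
              · obtain ⟨a, ha⟩ := hne
                obtain ⟨b, hb⟩ := hAne
                exact ⟨dist a b, a, ha, b, hb, rfl⟩
              · rintro r ⟨a, ha, b, hb, rfl⟩
                exact hsel.1.1 a ha.1.1 b (subset_closure hb)
            have hsdpos : 0 < ((n:ℝ)+2) * Real.sqrt d * cLen n :=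
              mul_pos (mul_pos (by positivity) hsqd) (cLen_pos _)
            have hdivle : Metric.diam (piece d V f₂ s) / setDist (piece d V f₂ s) A ≤
                (Real.sqrt d * cLen (n+e)) / (((n:ℝ)+2) * Real.sqrt d * cLen n) :=
              div_le_div₀ (mul_nonneg (Real.sqrt_nonneg _) (le_of_lt (cLen_pos _)))
                hdiam hsdpos hsd
            have hrhs : (Real.sqrt d * cLen (n+e)) / (((n:ℝ)+2) * Real.sqrt d * cLen n) =
                cLen e / ((n:ℝ)+2) := by
              rw [hcLadd]
              have h1 : Real.sqrt d ≠ 0 := ne_of_gt hsqd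
              have h2 : cLen n ≠ 0 := ne_of_gt (cLen_pos n)
              have h3 : ((n:ℝ)+2) ≠ 0 := by positivity
              field_simp
            rw [hrhs] at hdivle
            calc Metric.diam (piece d V f₂ s) / setDist (piece d V f₂ s) A ≤
                cLen e / ((n:ℝ)+2) := hdivle
              _ ≤ cLen e := div_le_self (le_of_lt (cLen_pos e))
                  (by have : (0:ℝ) ≤ (n:ℝ) := Nat.cast_nonneg n; linarith)
              _ ≤ M * cLen e := le_mul_of_one_le_left (le_of_lt (cLen_pos e)) hM1
          · rw [setDist, if_neg hAne, div_one]
            calc Metric.diam (piece d V f₂ s) ≤ Real.sqrt d * cLen (n+e) := hdiam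
              _ ≤ Real.sqrt d * cLen e :=
                  mul_le_mul_of_nonneg_left (cLen_anti (by omega)) (Real.sqrt_nonneg _)
              _ ≤ M * cLen e :=
                  mul_le_mul_of_nonneg_right (by linarith) (le_of_lt (cLen_pos e))
        calc Metric.diam (piece d V f₂ s) / setDist (piece d V f₂ s) A ≤ M * cLen e := hkey
          _ ≤ M * cLen N := mul_le_mul_of_nonneg_left (cLen_anti (by omega)) (le_of_lt hMpos)
          _ < ε := hMN
      · rw [Set.not_nonempty_iff_eq_empty] at hne
        rw [hne, Metric.diam_empty, zero_div]
        exact hε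
    · have hUU : UU d C V f₂ fσ i = ∅ := by rw [UU, dif_neg h]
      rw [hUU, Metric.diam_empty, zero_div]
      exact hε
  -- inside V
  · intro i
    rw [UU]
    split
    · exact ⟨_, Set.inter_subset_left.trans Set.inter_subset_right⟩
    · exact ⟨0, Set.empty_subset _⟩

end Stmt6Aux

open Stmt6Aux in
theorem stmt_6 (d : ℕ) (hd : 1 ≤ d) (F A : Set (EuclideanSpace ℝ (Fin d)))
    (hA : ∃ C, IsClosed C ∧ A = F ∩ C) :
    (∃ U : ℕ → Set (EuclideanSpace ℝ (Fin d)),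
      (∀ i, IsBox d (U i)) ∧
      (Pairwise fun i j => Disjoint (interior (U i)) (interior (U j))) ∧
      F ∩ (⋃ i, U i) = F \ A ∧
      Tendsto (fun i => Metric.diam (U i) / setDist (U i) A) atTop (nhds 0)) ∧
    (∀ V : ℕ → Set (EuclideanSpace ℝ (Fin d)),
      (∀ i, IsBox d (V i)) →
      (Pairwise fun i j => Disjoint (interior (V i)) (interior (V j))) →
      F \ A ⊆ F ∩ (⋃ i, V i) →
      ∃ U : ℕ → Set (EuclideanSpace ℝ (Fin d)),
        (∀ i, IsBox d (U i)) ∧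
        (Pairwise fun i j => Disjoint (interior (U i)) (interior (U j))) ∧
        F ∩ (⋃ i, U i) = F \ A ∧
        Tendsto (fun i => Metric.diam (U i) / setDist (U i) A) atTop (nhds 0) ∧
        ∀ i, ∃ j, U i ⊆ V j) := by
  classical
  constructor
  · -- part 1: use the standard unit grid as the ambient family of boxes
    obtain ⟨gZ, hgZ⟩ := exists_injective_nat (Fin d → ℤ)
    set Vg : ℕ → Set (EuclideanSpace ℝ (Fin d)) :=
      fun i => if h : ∃ k, gZ k = i then dcube d 0 h.choose else ∅ with hVg
    have hVgeq : ∀ k, Vg (gZ k) = dcube d 0 k := by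
      intro k
      rw [hVg]
      dsimp only
      rw [dif_pos ⟨k, rfl⟩]
      exact congrArg (dcube d 0)
        (hgZ (⟨k, rfl⟩ : ∃ k', gZ k' = gZ k).choose_spec)
    have hVg1 : ∀ j, IsBox d (Vg j) := by
      intro j
      rw [hVg]
      dsimp only
      split
      · exact isBox_dcube d 0 _
      · exact isBox_empty hd
    have hVg2 : Pairwise fun i j => Disjoint (interior (Vg i)) (interior (Vg j)) := by
      intro i j hij
      rw [hVg]
      dsimp only
      split <;> rename_i h1
      · split <;> rename_i h2
        · have hkk : h1.choose ≠ h2.choose := by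
            intro h
            exact hij (by rw [← h1.choose_spec, ← h2.choose_spec, h])
          exact Disjoint.mono (interior_dcube_subset _ _ _) (interior_dcube_subset _ _ _)
            (obox_same_gen_disjoint hkk)
        · simp
      · simp
    have hVg3 : F \ A ⊆ ⋃ j, Vg j := by
      intro x _
      refine Set.mem_iUnion.mpr ⟨gZ (fun i => ⌊x i * 2^0⌋), ?_⟩
      rw [hVgeq]
      exact mem_dcube_floor x 0
    obtain ⟨U, h1, h2, h3, h4, -⟩ := main hd F A hA Vg hVg1 hVg2 hVg3
    exact ⟨U, h1, h2, h3, h4⟩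
  · intro V hV1 hV2 hV3
    exact main hd F A hA V hV1 hV2 (fun x hx => (hV3 hx).2)
end

section
/- Let d ≥ 1 be an integer, let E ⊆ ℝ^d, let η > 0, and let {U_i}_{i=1}^∞ be a collection of boxes in ℝ^d with pairwise disjoint interiors such that E ∩ Int(U_i) is a non-universal differentiability set for each i. Then there exists a Lipschitz function g : ℝ^d → ℝ such that sup_{x ∈ ℝ^d} |g(x)| ≤ η and Lip(g) ≤ η, g is differentiable at no point of ⋃_{i=1}^∞ (E ∩ Int(U_i)), and g(x) = 0 for every x ∈ ℝ^d \ ⋃_{i=1}^∞ Int(U_i). -/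
open Metric Set Filter

lemma boxCompact (d : ℕ) (a b : Fin d → ℝ) :
    IsCompact {x : EuclideanSpace ℝ (Fin d) | ∀ i, x i ∈ Set.Icc (a i) (b i)} := by
  have h : IsCompact (univ.pi fun j => Icc (a j) (b j)) :=
    isCompact_univ_pi fun j => isCompact_Icc
  have := (EuclideanSpace.equiv (Fin d) ℝ).toHomeomorph.isCompact_preimage.2 h
  convert this using 1
  ext x
  simp [Set.mem_pi, Pi.le_def, forall_and]

lemma perBox (d : ℕ) (η : ℝ) (hη : 0 < η) (S V : Set (EuclideanSpace ℝ (Fin d)))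
    (hV : IsOpen V) (hVc : IsCompact (closure V)) (hSV : S ⊆ V)
    (hS : ¬ IsUDS d S) :
    ∃ G : EuclideanSpace ℝ (Fin d) → ℝ,
      LipschitzWith η.toNNReal G ∧ (∀ x, |G x| ≤ η) ∧
      Function.support G ⊆ V ∧ ∀ x ∈ S, ¬ DifferentiableAt ℝ G x := by
  rw [IsUDS] at hS
  push_neg at hS
  obtain ⟨f, ⟨K, hK⟩, hf⟩ := hS
  obtain ⟨φ, hsupp, hφ, hφr⟩ := hV.exists_contDiff_support_eq (n := ⊤)
  have hφc : HasCompactSupport φ := by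
    rw [HasCompactSupport, tsupport, hsupp]; exact hVc
  have hφd : Differentiable ℝ φ := hφ.differentiable (by norm_num)
  obtain ⟨C, hC⟩ := (HasCompactSupport.fderiv ℝ hφc).exists_bound_of_continuous
    (hφ.continuous_fderiv (by norm_num))
  set L := C.toNNReal with hLdef
  have hL : ∀ x, ‖fderiv ℝ φ x‖₊ ≤ L := by
    intro x
    rw [hLdef, ← Real.toNNReal_coe (r := ‖fderiv ℝ φ x‖₊)]
    exact Real.toNNReal_mono (by simpa using hC x)
  have hφlip : LipschitzWith L φ := lipschitzWith_of_nnnorm_fderiv_le hφd hL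
  have hφ01 : ∀ x, |φ x| ≤ 1 := by
    intro x
    have := hφr (Set.mem_range_self x)
    rw [abs_le]; exact ⟨by linarith [this.1], this.2⟩
  rcases V.eq_empty_or_nonempty with hVe | ⟨c, hc⟩
  · refine ⟨fun _ => 0, ?_, ?_, ?_, ?_⟩
    · exact LipschitzWith.of_dist_le_mul fun x y => by
        simp [dist_self]; positivity
    · intro x; simp [hη.le]
    · simp [Function.support]
    · intro x hx; exact absurd (hSV hx) (hVe ▸ notMem_empty x)
  obtain ⟨D, hD⟩ := hVc.isBounded.subset_closedBall c
  have hD' : ∀ x ∈ V, dist x c ≤ D := fun x hx => hD (subset_closure hx)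
  have hD0 : 0 ≤ D := le_trans (by simp) (hD' c hc)
  set T := (K : ℝ) * D + 1 with hTdef
  have hT : 0 < T := by positivity
  set h : EuclideanSpace ℝ (Fin d) → ℝ := fun x => ((f x - f c) ⊓ T) ⊔ (-T) with hhdef
  have hfc : LipschitzWith K (fun x => f x - f c) := by
    apply LipschitzWith.of_dist_le_mul
    intro x y
    rw [dist_sub_right]
    exact hK.dist_le_mul x y
  have hhlip : LipschitzWith K h := (hfc.min_const T).max_const (-T)
  have hhB : ∀ x, |h x| ≤ T := by
    intro x
    rw [abs_le]
    constructor
    · exact le_sup_right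
    · exact sup_le inf_le_right (by linarith)
  have hheq : ∀ x ∈ V, h x = f x - f c := by
    intro x hx
    have h1 : |f x - f c| ≤ (K : ℝ) * D := by
      have := hK.dist_le_mul x c
      rw [Real.dist_eq] at this
      exact this.trans (mul_le_mul_of_nonneg_left (hD' x hx) K.coe_nonneg)
    rw [abs_le] at h1
    show (f x - f c) ⊓ T ⊔ -T = f x - f c
    rw [min_eq_left (by linarith : f x - f c ≤ T)]
    exact max_eq_left (by linarith)
  set B := (K : ℝ) + (L : ℝ) * T + T with hBdef
  have hB0 : 0 ≤ B := by positivity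
  set ε := η / (B + 1) with hεdef
  have hε : 0 < ε := by positivity
  have hεB : ε * (B + 1) = η := div_mul_cancel₀ η (by positivity)
  refine ⟨fun x => ε * (φ x * h x), ?_, ?_, ?_, ?_⟩
  · apply LipschitzWith.of_dist_le_mul
    intro x y
    rw [Real.coe_toNNReal η hη.le, Real.dist_eq, ← mul_sub, abs_mul, abs_of_pos hε]
    have key : |φ x * h x - φ y * h y| ≤ ((K : ℝ) + (L : ℝ) * T) * dist x y := by
      have e : φ x * h x - φ y * h y = φ x * (h x - h y) + h y * (φ x - φ y) := by ring
      rw [e]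
      calc |φ x * (h x - h y) + h y * (φ x - φ y)|
          ≤ |φ x| * |h x - h y| + |h y| * |φ x - φ y| := by
            refine (abs_add_le _ _).trans ?_
            rw [abs_mul, abs_mul]
        _ ≤ 1 * ((K : ℝ) * dist x y) + T * ((L : ℝ) * dist x y) := by
            have l1 := hhlip.dist_le_mul x y
            have l2 := hφlip.dist_le_mul x y
            rw [Real.dist_eq] at l1 l2
            have := hφ01 x
            have := hhB y
            have := abs_nonneg (h x - h y)
            have := abs_nonneg (φ x - φ y)
            have hd := dist_nonneg (x := x) (y := y)
            nlinarith [abs_nonneg (φ x), abs_nonneg (h y)]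
        _ = ((K : ℝ) + (L : ℝ) * T) * dist x y := by ring
    calc ε * |φ x * h x - φ y * h y| ≤ ε * (((K : ℝ) + (L : ℝ) * T) * dist x y) := by
          exact mul_le_mul_of_nonneg_left key hε.le
      _ ≤ η * dist x y := by
          have hd := dist_nonneg (x := x) (y := y)
          have hle : (K : ℝ) + (L : ℝ) * T ≤ B + 1 := by
            rw [hBdef]; nlinarith [L.coe_nonneg]
          calc ε * (((K : ℝ) + (L : ℝ) * T) * dist x y)
              ≤ ε * ((B + 1) * dist x y) :=
                mul_le_mul_of_nonneg_left (mul_le_mul_of_nonneg_right hle hd) hε.le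
            _ = η * dist x y := by rw [← hεB]; ring
  · intro x
    rw [abs_mul, abs_mul, abs_of_pos hε]
    calc ε * (|φ x| * |h x|) ≤ ε * (1 * T) :=
          mul_le_mul_of_nonneg_left
            (mul_le_mul (hφ01 x) (hhB x) (abs_nonneg _) zero_le_one) hε.le
      _ ≤ η := by
          have hle : (1:ℝ) * T ≤ B + 1 := by
            rw [hBdef]; nlinarith [K.coe_nonneg, mul_nonneg (L.coe_nonneg) hT.le]
          calc ε * (1 * T) ≤ ε * (B + 1) := mul_le_mul_of_nonneg_left hle hε.le
            _ = η := hεB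
  · intro x hx
    have hφx : φ x ≠ 0 := by
      intro h0
      apply hx
      simp [h0]
    rw [← hsupp]
    exact hφx
  · intro x hxS hdiff
    have hxV := hSV hxS
    have hφx : φ x ≠ 0 := by rw [← Function.mem_support, hsupp]; exact hxV
    have h1 : DifferentiableAt ℝ (fun y => φ y * h y) x := by
      have h0 := hdiff.const_mul ε⁻¹
      have : (fun y => ε⁻¹ * (ε * (φ y * h y))) = fun y => φ y * h y := by
        funext y; rw [← mul_assoc, inv_mul_cancel₀ hε.ne', one_mul]
      rwa [this] at h0
    have h2 : DifferentiableAt ℝ (fun y => (φ y * h y) * (φ y)⁻¹) x :=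
      h1.mul ((hφd x).inv hφx)
    have h3 : (fun y => (φ y * h y) * (φ y)⁻¹) =ᶠ[nhds x] h := by
      have hev : ∀ᶠ y in nhds x, φ y ≠ 0 :=
        (hφ.continuous.continuousAt).eventually_ne hφx
      filter_upwards [hev] with y hy
      field_simp
    have h4 : DifferentiableAt ℝ h x := h3.differentiableAt_iff.mp h2
    have h5 : h =ᶠ[nhds x] (fun y => f y - f c) :=
      eventually_of_mem (hV.mem_nhds hxV) (fun y hy => hheq y hy)
    have h6 : DifferentiableAt ℝ (fun y => f y - f c) x := h5.differentiableAt_iff.mp h4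
    have h7 : DifferentiableAt ℝ f x := by
      have := h6.add_const (f c)
      simpa using this
    exact hf x hxS h7

lemma segZero (d : ℕ) (V : ℕ → Set (EuclideanSpace ℝ (Fin d)))
    (hVo : ∀ i, IsOpen (V i))
    (hdisj : Pairwise fun i j => Disjoint (V i) (V j))
    (G : ℕ → EuclideanSpace ℝ (Fin d) → ℝ)
    (hGsupp : ∀ i, Function.support (G i) ⊆ V i)
    {i : ℕ} {x y : EuclideanSpace ℝ (Fin d)} (hx : x ∈ V i) (hy : y ∉ V i) :
    ∃ z, (∀ j, G j z = 0) ∧ dist x z + dist z y = dist x y := by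
  set γ : ℝ → EuclideanSpace ℝ (Fin d) := fun t => x + t • (y - x) with hγ
  have hγcont : Continuous γ := by
    apply continuous_const.add
    exact continuous_id.smul continuous_const
  have hγ0 : γ 0 = x := by simp [hγ]
  have hγ1 : γ 1 = y := by simp [hγ]
  set A := {t : ℝ | t ∈ Icc (0:ℝ) 1 ∧ γ t ∉ V i} with hA
  have hA1 : (1:ℝ) ∈ A := ⟨⟨zero_le_one, le_refl 1⟩, by rwa [hγ1]⟩
  have hAne : A.Nonempty := ⟨1, hA1⟩
  have hAbd : BddBelow A := ⟨0, fun t ht => ht.1.1⟩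
  have hAcl : IsClosed A := by
    have hAeq : A = Icc 0 1 ∩ γ ⁻¹' (V i)ᶜ := by
      ext t; simp only [hA, Set.mem_setOf_eq, Set.mem_inter_iff, Set.mem_preimage,
        Set.mem_compl_iff]
    rw [hAeq]
    exact isClosed_Icc.inter ((hVo i).isClosed_compl.preimage hγcont)
  set t₀ := sInf A with ht₀
  have ht₀A : t₀ ∈ A := hAcl.csInf_mem hAne hAbd
  have ht₀0 : 0 ≤ t₀ := ht₀A.1.1
  have ht₀1 : t₀ ≤ 1 := ht₀A.1.2
  have ht₀pos : 0 < t₀ := by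
    rcases ht₀0.lt_or_eq with h | h
    · exact h
    · exfalso
      apply ht₀A.2
      rw [← h, hγ0]
      exact hx
  have hbefore : ∀ t, 0 ≤ t → t < t₀ → γ t ∈ V i := by
    intro t h0 hlt
    by_contra hmem
    have : t ∈ A := ⟨⟨h0, hlt.le.trans ht₀1⟩, hmem⟩
    exact absurd (csInf_le hAbd this) (not_le.2 hlt)
  refine ⟨γ t₀, ?_, ?_⟩
  · intro j
    by_contra hGz
    have hzVj : γ t₀ ∈ V j := hGsupp j hGz
    have hji : j ≠ i := by rintro rfl; exact ht₀A.2 hzVj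
    have hcl : γ t₀ ∈ closure (V i) := by
      have h1 : γ t₀ ∈ γ '' closure (Ico 0 t₀) := by
        refine ⟨t₀, ?_, rfl⟩
        rw [closure_Ico ht₀pos.ne]
        exact ⟨ht₀0, le_refl _⟩
      have h2 : γ '' closure (Ico 0 t₀) ⊆ closure (γ '' Ico 0 t₀) :=
        image_closure_subset_closure_image hγcont
      have h3 : γ '' Ico 0 t₀ ⊆ V i := by
        rintro _ ⟨t, ⟨h0, hlt⟩, rfl⟩
        exact hbefore t h0 hlt
      exact closure_mono h3 (h2 h1)
    have hmem : γ t₀ ∈ closure (V j ∩ V i) :=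
      (hVo j).inter_closure ⟨hzVj, hcl⟩
    rw [(hdisj hji).inter_eq] at hmem
    simp at hmem
  · have e0 : x - γ t₀ = (-t₀) • (y - x) := by
      simp [hγ]
    have e1 : dist x (γ t₀) = t₀ * dist x y := by
      rw [dist_eq_norm, dist_eq_norm, e0, norm_smul]
      simp [abs_of_pos ht₀pos, norm_sub_rev]
    have e0' : γ t₀ - y = (1 - t₀) • (x - y) := by
      rw [hγ]
      simp only [smul_sub, sub_smul, one_smul]
      abel
    have e2 : dist (γ t₀) y = (1 - t₀) * dist x y := by
      rw [dist_eq_norm, dist_eq_norm, e0', norm_smul]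
      simp [abs_of_nonneg (by linarith : (0:ℝ) ≤ 1 - t₀)]
    rw [e1, e2]
    ring

theorem stmt_9 (d : ℕ) (hd : 1 ≤ d) (E : Set (EuclideanSpace ℝ (Fin d)))
    (η : ℝ) (hη : 0 < η)
    (U : ℕ → Set (EuclideanSpace ℝ (Fin d))) (hU : ∀ i, IsBox d (U i))
    (hdisj : Pairwise fun i j => Disjoint (interior (U i)) (interior (U j)))
    (hnonUDS : ∀ i, ¬ IsUDS d (E ∩ interior (U i))) :
    ∃ g : EuclideanSpace ℝ (Fin d) → ℝ,
      (∃ K : NNReal, LipschitzWith K g) ∧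
      (∀ x, |g x| ≤ η) ∧ (lipConst g : ℝ) ≤ η ∧
      (∀ x ∈ ⋃ i, E ∩ interior (U i), ¬ DifferentiableAt ℝ g x) ∧
      ∀ x ∉ ⋃ i, interior (U i), g x = 0 := by
  set V : ℕ → Set (EuclideanSpace ℝ (Fin d)) := fun i => interior (U i) with hVdef
  have hVo : ∀ i, IsOpen (V i) := fun i => isOpen_interior
  have hUcomp : ∀ i, IsCompact (U i) := by
    intro i
    obtain ⟨a, b, hab⟩ := hU i
    rw [hab]
    exact boxCompact d a b
  have hVc : ∀ i, IsCompact (closure (V i)) := fun i =>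
    (hUcomp i).of_isClosed_subset isClosed_closure
      (closure_minimal interior_subset (hUcomp i).isClosed)
  choose G hGlip hGb hGsupp hGnd using fun i =>
    perBox d η hη (E ∩ V i) (V i) (hVo i) (hVc i) inter_subset_right (hnonUDS i)
  set g : EuclideanSpace ℝ (Fin d) → ℝ := fun x => ∑' j, G j x with hgdef
  have hgV : ∀ i x, x ∈ V i → g x = G i x := by
    intro i x hx
    apply tsum_eq_single
    intro j hj
    by_contra hne
    exact Set.disjoint_left.1 (hdisj hj) (hGsupp j hne) hx
  have hg0 : ∀ x, (∀ j, G j x = 0) → g x = 0 := by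
    intro x h
    calc g x = ∑' _ : ℕ, (0:ℝ) := tsum_congr h
      _ = 0 := tsum_zero
  have hgout : ∀ x, x ∉ (⋃ j, V j) → g x = 0 := by
    intro x hx
    apply hg0
    intro j
    by_contra hne
    exact hx (Set.mem_iUnion.2 ⟨j, hGsupp j hne⟩)
  have hηc : ((η.toNNReal : ℝ)) = η := Real.coe_toNNReal η hη.le
  have hGd : ∀ i x y, dist (G i x) (G i y) ≤ η * dist x y := by
    intro i x y
    have := (hGlip i).dist_le_mul x y
    rwa [hηc] at this
  have key : ∀ i x y, x ∈ V i → y ∉ V i → dist (g x) (g y) ≤ η * dist x y := by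
    intro i x y hx hy
    obtain ⟨z, hz, hdist⟩ := segZero d V hVo hdisj G hGsupp hx hy
    have hgz : g z = 0 := hg0 z hz
    have d1 : dist (g x) (g z) ≤ η * dist x z := by
      rw [hgV i x hx, hgz, ← hz i]
      exact hGd i x z
    have d2 : dist (g z) (g y) ≤ η * dist z y := by
      by_cases hyV : ∃ j, y ∈ V j
      · obtain ⟨j, hj⟩ := hyV
        rw [hgV j y hj, hgz, ← hz j]
        exact hGd j z y
      · rw [hgz, hgout y (by simpa using hyV)]
        simp only [dist_self]
        positivity
    calc dist (g x) (g y) ≤ dist (g x) (g z) + dist (g z) (g y) := dist_triangle _ _ _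
      _ ≤ η * dist x z + η * dist z y := add_le_add d1 d2
      _ = η * dist x y := by rw [← hdist]; ring
  have hglip : LipschitzWith η.toNNReal g := by
    apply LipschitzWith.of_dist_le_mul
    intro x y
    rw [hηc]
    by_cases hx : ∃ i, x ∈ V i
    · obtain ⟨i, hxi⟩ := hx
      by_cases hy : y ∈ V i
      · rw [hgV i x hxi, hgV i y hy]
        exact hGd i x y
      · exact key i x y hxi hy
    · by_cases hy : ∃ j, y ∈ V j
      · obtain ⟨j, hyj⟩ := hy
        rw [dist_comm, dist_comm x y]
        exact key j y x hyj (fun h => hx ⟨j, h⟩)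
      · rw [hgout x (by simpa using hx), hgout y (by simpa using hy)]
        simp only [dist_self]
        positivity
  refine ⟨g, ⟨η.toNNReal, hglip⟩, ?_, ?_, ?_, ?_⟩
  · intro x
    by_cases hx : ∃ i, x ∈ V i
    · obtain ⟨i, hxi⟩ := hx
      rw [hgV i x hxi]
      exact hGb i x
    · rw [hgout x (by simpa using hx)]
      simpa using hη.le
  · have h1 : lipConst g ≤ η.toNNReal := csInf_le (OrderBot.bddBelow _) hglip
    calc ((lipConst g : ℝ)) ≤ ((η.toNNReal : ℝ)) := NNReal.coe_le_coe.2 h1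
      _ = η := hηc
  · intro x hx
    obtain ⟨i, hxi⟩ := Set.mem_iUnion.1 hx
    intro hdiff
    have hev : g =ᶠ[nhds x] G i :=
      eventually_of_mem ((hVo i).mem_nhds hxi.2) (fun y hy => hgV i y hy)
    exact hGnd i x hxi (hev.differentiableAt_iff.mp hdiff)
  · intro x hx
    exact hgout x hx
end

section
/- Let d ≥ 1 be an integer, let {U_i}_{i=1}^∞ be a collection of boxes in ℝ^d with pairwise disjoint interiors, let h : ℝ^d → ℝ be a Lipschitz function and let σ > 0. Then there exists a Lipschitz function ĥ : ℝ^d → ℝ such that sup_{x ∈ ℝ^d} |ĥ(x) − h(x)| ≤ σ and Lip(ĥ) ≤ Lip(h) + σ, ĥ is differentiable at every point of ⋃_{i=1}^∞ Int(U_i), and ĥ(x) = h(x) for all x ∈ ℝ^d \ ⋃_{i=1}^∞ Int(U_i). -/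
open Metric Set Filter
open Function MeasureTheory

lemma norm_fderiv_le_iteratedFDeriv_one' {E F : Type*} [NormedAddCommGroup E] [NormedSpace ℝ E]
    [NormedAddCommGroup F] [NormedSpace ℝ F] (f : E → F) (x : E) :
    ‖fderiv ℝ f x‖ ≤ ‖iteratedFDeriv ℝ 1 f x‖ := by
  apply ContinuousLinearMap.opNorm_le_bound _ (norm_nonneg _) (fun v => ?_)
  have h := (iteratedFDeriv ℝ 1 f x).le_opNorm (fun _ => v)
  simp only [iteratedFDeriv_one_apply] at h
  simpa using h

lemma exists_smooth_minorant (d : ℕ) (Ω : Set (EuclideanSpace ℝ (Fin d))) (hΩ : IsOpen Ω)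
    {ε : ℝ} (hε : 0 < ε) :
    ∃ δ : EuclideanSpace ℝ (Fin d) → ℝ, ContDiff ℝ 1 δ ∧ (∀ x, 0 ≤ δ x) ∧ (∀ x, δ x ≤ ε) ∧
      (∀ x ∈ Ω, 0 < δ x) ∧ (∀ x ∉ Ω, δ x = 0) ∧ (∀ x y, |δ x - δ y| ≤ ε * dist x y) := by
  classical
  obtain ⟨T, hTc, hTd⟩ := TopologicalSpace.exists_countable_dense (EuclideanSpace ℝ (Fin d))
  have hScount : {p : EuclideanSpace ℝ (Fin d) × ℕ |
      p.1 ∈ T ∧ closedBall p.1 ((1/2 : ℝ) ^ p.2) ⊆ Ω}.Countable := by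
    apply Set.Countable.mono _ (hTc.prod (Set.countable_univ (α := ℕ)))
    intro p hp
    exact ⟨hp.1, Set.mem_univ _⟩
  set S := {p : EuclideanSpace ℝ (Fin d) × ℕ |
      p.1 ∈ T ∧ closedBall p.1 ((1/2 : ℝ) ^ p.2) ⊆ Ω} with hS
  haveI : Countable S := hScount.to_subtype
  obtain ⟨e, he⟩ := exists_injective_nat S
  have hrpos : ∀ p : S, (0:ℝ) < (1/2 : ℝ) ^ (p.1.2) := fun p => by positivity
  let bump : ∀ p : S, ContDiffBump (p.1.1) := fun p =>
    ⟨(1/2 : ℝ) ^ (p.1.2) / 2, (1/2 : ℝ) ^ (p.1.2),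
      by have := hrpos p; linarith, by have := hrpos p; linarith⟩
  have key : ∀ p : S, ∃ C : ℝ, 0 ≤ C ∧ ∀ k : ℕ, k ≤ 1 → ∀ x,
      ‖iteratedFDeriv ℝ k (⇑(bump p)) x‖ ≤ C := by
    intro p
    have hcs := (bump p).hasCompactSupport
    have hcd : ContDiff ℝ ((⊤ : ℕ∞) : WithTop ℕ∞) ⇑(bump p) := (bump p).contDiff
    obtain ⟨C0, h0⟩ := ((hcs.iteratedFDeriv 0).exists_bound_of_continuous
      (hcd.continuous_iteratedFDeriv (by exact_mod_cast le_top)))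
    obtain ⟨C1, h1⟩ := ((hcs.iteratedFDeriv 1).exists_bound_of_continuous
      (hcd.continuous_iteratedFDeriv (by exact_mod_cast le_top)))
    refine ⟨max C0 C1, le_trans (norm_nonneg _) (le_trans (h0 0) (le_max_left _ _)), ?_⟩
    intro k hk x
    interval_cases k
    · exact le_trans (h0 x) (le_max_left _ _)
    · exact le_trans (h1 x) (le_max_right _ _)
  choose C hC0 hC using key
  set a : S → ℝ := fun p => (ε / 2) * (1/2 : ℝ) ^ (e p) / (1 + C p) with ha
  have hapos : ∀ p, 0 < a p := fun p => by
    have := hC0 p; positivity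
  have haC : ∀ p, a p * C p ≤ (ε / 2) * (1/2 : ℝ) ^ (e p) := by
    intro p
    have h1 : 0 < 1 + C p := by have := hC0 p; linarith
    rw [ha]
    rw [div_mul_eq_mul_div, div_le_iff₀ h1]
    have h2 : 0 ≤ (ε / 2) * (1/2 : ℝ) ^ (e p) := by positivity
    nlinarith [hC0 p]
  have hale : ∀ p, a p ≤ (ε / 2) * (1/2 : ℝ) ^ (e p) := by
    intro p
    have h1 : 0 < 1 + C p := by have := hC0 p; linarith
    rw [ha, div_le_iff₀ h1]
    have h2 : 0 ≤ (ε / 2) * (1/2 : ℝ) ^ (e p) := by positivity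
    nlinarith [hC0 p, h2]
  set v : ℕ → S → ℝ := fun _ p => (ε / 2) * (1/2 : ℝ) ^ (e p) with hv
  have hgsum : Summable (fun n : ℕ => (ε / 2) * (1/2 : ℝ) ^ n) :=
    summable_geometric_two.mul_left (ε / 2)
  have hvsum : ∀ k : ℕ, (k : ℕ∞) ≤ 1 → Summable (v k) := by
    intro k _
    exact hgsum.comp_injective he
  set f : S → EuclideanSpace ℝ (Fin d) → ℝ := fun p => a p • ⇑(bump p) with hf
  have hfc : ∀ p, ContDiff ℝ 1 (f p) := by
    intro p
    have h1 : ContDiff ℝ 1 ⇑(bump p) := (bump p).contDiff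
    exact h1.const_smul (a p)
  have h'f : ∀ (k : ℕ) (p : S) (x : EuclideanSpace ℝ (Fin d)), (k : ℕ∞) ≤ 1 →
      ‖iteratedFDeriv ℝ k (f p) x‖ ≤ v k p := by
    intro k p x hk
    have hk' : k ≤ 1 := by exact_mod_cast hk
    show ‖iteratedFDeriv ℝ k (a p • ⇑(bump p)) x‖ ≤ v k p
    rw [iteratedFDeriv_const_smul_apply ((bump p).contDiff.contDiffAt)]
    rw [norm_smul, Real.norm_eq_abs, abs_of_pos (hapos p)]
    calc a p * ‖iteratedFDeriv ℝ k (⇑(bump p)) x‖ ≤ a p * C p :=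
          mul_le_mul_of_nonneg_left (hC p k hk' x) (hapos p).le
      _ ≤ v k p := haC p
  set δ : EuclideanSpace ℝ (Fin d) → ℝ := fun x => ∑' p : S, f p x with hδ
  have hδcd : ContDiff ℝ 1 δ := by
    have h6 : ContDiff ℝ ((1:ℕ∞) : WithTop ℕ∞) δ :=
      contDiff_tsum hfc hvsum (fun k p x hk => h'f k p x hk)
    exact h6.of_le (by exact_mod_cast le_rfl)
  have hsumx : ∀ x, Summable fun p : S => f p x := by
    intro x
    apply Summable.of_norm_bounded (hvsum 0 (by norm_num))
    intro p
    have h2 := h'f 0 p x (by norm_num)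
    rw [norm_iteratedFDeriv_zero] at h2
    exact h2
  have hfnonneg : ∀ (p : S) x, 0 ≤ f p x := fun p x =>
    smul_nonneg (hapos p).le ((bump p).nonneg)
  have htsumv : ∀ k : ℕ, Summable (v k) → ∑' p : S, v k p ≤ ε := by
    intro k hsm
    have h1 : ∑' p : S, v k p ≤ ∑' n : ℕ, (ε / 2) * (1/2 : ℝ) ^ n :=
      Summable.tsum_le_tsum_of_inj e he (fun n _ => by positivity) (fun p => le_rfl) hsm hgsum
    have h2 : ∑' n : ℕ, (ε / 2) * (1/2 : ℝ) ^ n = ε := by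
      rw [tsum_mul_left, tsum_geometric_two]; ring
    linarith
  refine ⟨δ, hδcd, ?_, ?_, ?_, ?_, ?_⟩
  · intro x
    exact tsum_nonneg (fun p => hfnonneg p x)
  · intro x
    have hb : ∀ p : S, f p x ≤ v 0 p := by
      intro p
      have h3 : f p x = a p * (bump p) x := rfl
      rw [h3]
      calc a p * (bump p) x ≤ a p * 1 := mul_le_mul_of_nonneg_left (bump p).le_one (hapos p).le
        _ = a p := mul_one _
        _ ≤ v 0 p := hale p
    calc δ x ≤ ∑' p : S, v 0 p := Summable.tsum_le_tsum hb (hsumx x) (hvsum 0 (by norm_num))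
      _ ≤ ε := htsumv 0 (hvsum 0 (by norm_num))
  · intro x hx
    obtain ⟨ρ, hρ, hball⟩ := Metric.isOpen_iff.1 hΩ x hx
    obtain ⟨n, hn⟩ := exists_pow_lt_of_lt_one (show (0:ℝ) < ρ/4 by linarith)
      (show (1/2 : ℝ) < 1 by norm_num)
    obtain ⟨q, hqT, hq⟩ := hTd.exists_dist_lt x (show (0:ℝ) < (1/2)^n by positivity)
    have hsub : closedBall q ((1/2 : ℝ)^n) ⊆ Ω := by
      intro z hz
      apply hball
      rw [mem_ball]
      rw [mem_closedBall] at hz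
      have h4 : dist z x ≤ dist z q + dist q x := dist_triangle z q x
      rw [dist_comm q x] at h4
      calc dist z x ≤ (1/2:ℝ)^n + (1/2:ℝ)^n := by linarith [hq.le]
        _ < ρ/4 + ρ/4 := by linarith
        _ ≤ ρ := by linarith
    have hp₀ : ((q, n) : EuclideanSpace ℝ (Fin d) × ℕ) ∈ S := ⟨hqT, hsub⟩
    set p₀ : S := ⟨(q, n), hp₀⟩ with hp₀'
    have hmem : x ∈ ball p₀.1.1 ((bump p₀).rOut) := by
      rw [mem_ball]
      exact hq
    have hpos : 0 < f p₀ x := smul_pos (hapos p₀) ((bump p₀).pos_of_mem_ball hmem)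
    calc (0:ℝ) < f p₀ x := hpos
      _ ≤ δ x := Summable.le_tsum (hsumx x) p₀ (fun q _ => hfnonneg q x)
  · intro x hx
    rw [hδ]
    simp only
    convert tsum_zero with p
    have hns : x ∉ Function.support ⇑(bump p) := by
      rw [(bump p).support_eq]
      intro hmem
      exact hx (p.2.2 (ball_subset_closedBall hmem))
    have hz : (bump p) x = 0 := by
      by_contra hne
      exact hns hne
    show a p * (bump p) x = 0
    rw [hz, mul_zero]
  · intro x y
    have hdiff : Differentiable ℝ δ := hδcd.differentiable one_ne_zero
    have hbound : ∀ z, ‖fderiv ℝ δ z‖₊ ≤ ε.toNNReal := by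
      intro z
      rw [← NNReal.coe_le_coe, coe_nnnorm, Real.coe_toNNReal _ hε.le]
      have e1 : iteratedFDeriv ℝ 1 δ z = ∑' p : S, iteratedFDeriv ℝ 1 (f p) z :=
        iteratedFDeriv_tsum_apply hfc hvsum (fun k p x hk => h'f k p x hk) le_rfl z
      have hsn : Summable fun p : S => ‖iteratedFDeriv ℝ 1 (f p) z‖ :=
        Summable.of_nonneg_of_le (fun p => norm_nonneg _)
          (fun p => h'f 1 p z le_rfl) (hvsum 1 le_rfl)
      calc ‖fderiv ℝ δ z‖ ≤ ‖iteratedFDeriv ℝ 1 δ z‖ := norm_fderiv_le_iteratedFDeriv_one' δ z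
        _ = ‖∑' p : S, iteratedFDeriv ℝ 1 (f p) z‖ := by rw [e1]
        _ ≤ ∑' p : S, ‖iteratedFDeriv ℝ 1 (f p) z‖ := norm_tsum_le_tsum_norm hsn
        _ ≤ ∑' p : S, v 1 p := Summable.tsum_le_tsum (fun p => h'f 1 p z le_rfl) hsn (hvsum 1 le_rfl)
        _ ≤ ε := htsumv 1 (hvsum 1 le_rfl)
    have hlip := lipschitzWith_of_nnnorm_fderiv_le hdiff hbound
    have h5 := hlip.dist_le_mul x y
    rw [Real.dist_eq] at h5
    calc |δ x - δ y| ≤ (ε.toNNReal : ℝ) * dist x y := h5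
      _ = ε * dist x y := by rw [Real.coe_toNNReal _ hε.le]

lemma lipConst_le {α : Type*} [PseudoMetricSpace α] {f : α → ℝ} {K : NNReal}
    (hf : LipschitzWith K f) : lipConst f ≤ K :=
  csInf_le (OrderBot.bddBelow _) hf

lemma lipschitzWith_lipConst {α : Type*} [PseudoMetricSpace α] (f : α → ℝ)
    (hf : ∃ K : NNReal, LipschitzWith K f) : LipschitzWith (lipConst f) f := by
  have hcl : IsClosed {K : NNReal | LipschitzWith K f} := by
    have : {K : NNReal | LipschitzWith K f} =
        ⋂ (x : α) (y : α), {K : NNReal | dist (f x) (f y) ≤ (K : ℝ) * dist x y} := by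
      ext K
      simp [lipschitzWith_iff_dist_le_mul, Set.mem_iInter]
    rw [this]
    exact isClosed_iInter fun x => isClosed_iInter fun y =>
      isClosed_le continuous_const ((NNReal.continuous_coe.mul continuous_const))
  exact hcl.csInf_mem hf (OrderBot.bddBelow _)

theorem main_construction (d : ℕ)
    (Ω : Set (EuclideanSpace ℝ (Fin d))) (hΩ : IsOpen Ω)
    (δ : EuclideanSpace ℝ (Fin d) → ℝ) (hδcd : ContDiff ℝ 1 δ)
    (hδ0 : ∀ x, 0 ≤ δ x) {ε : ℝ} (hε : 0 < ε) (hδε : ∀ x, δ x ≤ ε)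
    (hδpos : ∀ x ∈ Ω, 0 < δ x) (hδzero : ∀ x ∉ Ω, δ x = 0)
    (hδlip : ∀ x y, |δ x - δ y| ≤ ε * dist x y)
    (h : EuclideanSpace ℝ (Fin d) → ℝ) {L : NNReal} (hL : LipschitzWith L h) :
    ∃ hhat : EuclideanSpace ℝ (Fin d) → ℝ,
      (∀ x y, dist (hhat x) (hhat y) ≤ ((L : ℝ) * (1 + ε)) * dist x y) ∧
      (∀ x, |hhat x - h x| ≤ (L : ℝ) * ε) ∧
      (∀ x ∈ Ω, DifferentiableAt ℝ hhat x) ∧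
      ∀ x ∉ Ω, hhat x = h x := by
  classical
  set Lr : ℝ := (L : ℝ) with hLrdef
  have hLr : 0 ≤ Lr := L.coe_nonneg
  set φ : ContDiffBump (0 : EuclideanSpace ℝ (Fin d)) :=
    ⟨1/2, 1, by norm_num, by norm_num⟩ with hφdef
  set φn : EuclideanSpace ℝ (Fin d) → ℝ := φ.normed volume with hφn
  have hφin : Integrable φn volume := φ.integrable_normed
  have hφcont : Continuous φn := φ.continuous_normed
  have hφnn : ∀ u, 0 ≤ φn u := φ.nonneg_normed
  set hhat : EuclideanSpace ℝ (Fin d) → ℝ :=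
    fun x => ∫ u, φn u • h (x - δ x • u) with hhatdef
  -- integrability
  have hInt : ∀ (F : EuclideanSpace ℝ (Fin d) → EuclideanSpace ℝ (Fin d)), Continuous F →
      Integrable (fun u => φn u • h (F u)) volume := by
    intro F hFc
    apply Continuous.integrable_of_hasCompactSupport
    · exact hφcont.smul ((hL.continuous).comp hFc)
    · exact (φ.hasCompactSupport_normed).smul_right
  -- key estimate
  have key : ∀ (F G : EuclideanSpace ℝ (Fin d) → EuclideanSpace ℝ (Fin d)) (D : ℝ), 0 ≤ D →
      (∀ u : EuclideanSpace ℝ (Fin d), ‖u‖ ≤ 1 → dist (F u) (G u) ≤ D) →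
      Continuous F → Continuous G →
      |(∫ u, φn u • h (F u)) - ∫ u, φn u • h (G u)| ≤ Lr * D := by
    intro F G D hD hFG hFc hGc
    rw [← integral_sub (hInt F hFc) (hInt G hGc)]
    have hbig : |∫ u, (φn u • h (F u) - φn u • h (G u))| ≤ ∫ u, φn u * (Lr * D) := by
      rw [← Real.norm_eq_abs]
      apply norm_integral_le_of_norm_le (hφin.mul_const (Lr * D))
      apply Eventually.of_forall
      intro u
      rw [← smul_sub, norm_smul, Real.norm_eq_abs, Real.norm_eq_abs, abs_of_nonneg (hφnn u)]
      by_cases hu : φn u = 0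
      · rw [hu]
        simp only [zero_mul]
        positivity
      · have hus : u ∈ Function.support φn := hu
        rw [hφn, φ.support_normed_eq] at hus
        have hu1 : ‖u‖ ≤ 1 := by
          rw [mem_ball, dist_zero_right] at hus
          exact hus.le
        apply mul_le_mul_of_nonneg_left _ (hφnn u)
        have h1 : |h (F u) - h (G u)| = dist (h (F u)) (h (G u)) := (Real.dist_eq _ _).symm
        rw [h1]
        calc dist (h (F u)) (h (G u)) ≤ Lr * dist (F u) (G u) := hL.dist_le_mul _ _
          _ ≤ Lr * D := mul_le_mul_of_nonneg_left (hFG u hu1) hLr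
    have hval : ∫ u, φn u * (Lr * D) = Lr * D := by
      rw [integral_mul_const]
      rw [hφn, φ.integral_normed, one_mul]
    linarith [hbig, hval.le, hval.ge]
  -- constant integral
  have hconst : ∀ x : EuclideanSpace ℝ (Fin d), (∫ u, φn u • h x) = h x := by
    intro x
    rw [integral_smul_const, hφn, φ.integral_normed, one_smul]
  -- (A) outside
  have hA : ∀ x ∉ Ω, hhat x = h x := by
    intro x hx
    rw [hhatdef]
    simp only [hδzero x hx, zero_smul, sub_zero]
    exact hconst x
  -- (B) sup bound
  have hB : ∀ x, |hhat x - h x| ≤ Lr * δ x := by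
    intro x
    rw [hhatdef]
    simp only
    rw [← hconst x]
    apply key (fun u => x - δ x • u) (fun _ => x) (δ x) (hδ0 x) _ _ continuous_const
    · intro u hu
      rw [dist_eq_norm]
      simp only [sub_sub_cancel_left, norm_neg]
      rw [norm_smul, Real.norm_eq_abs, abs_of_nonneg (hδ0 x)]
      calc δ x * ‖u‖ ≤ δ x * 1 := mul_le_mul_of_nonneg_left hu (hδ0 x)
        _ = δ x := mul_one _
    · exact continuous_const.sub (continuous_id.const_smul (δ x))
  -- (C) Lipschitz
  have hC : ∀ x y, dist (hhat x) (hhat y) ≤ (Lr * (1 + ε)) * dist x y := by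
    intro x y
    rw [Real.dist_eq]
    have e1 : |hhat x - hhat y| ≤ Lr * ((1 + ε) * dist x y) := by
      rw [hhatdef]
      simp only
      apply key (fun u => x - δ x • u) (fun u => y - δ y • u) ((1 + ε) * dist x y)
        (by positivity) _
        (continuous_const.sub (continuous_id.const_smul (δ x)))
        (continuous_const.sub (continuous_id.const_smul (δ y)))
      intro u hu
      rw [dist_eq_norm]
      have e2 : x - δ x • u - (y - δ y • u) = (x - y) - (δ x - δ y) • u := by
        rw [sub_smul]
        abel
      rw [e2]
      calc ‖(x - y) - (δ x - δ y) • u‖ ≤ ‖x - y‖ + ‖(δ x - δ y) • u‖ := norm_sub_le _ _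
        _ = dist x y + |δ x - δ y| * ‖u‖ := by
            rw [dist_eq_norm, norm_smul, Real.norm_eq_abs]
        _ ≤ dist x y + (ε * dist x y) * 1 := by
            apply add_le_add_right
            apply mul_le_mul (hδlip x y) hu (norm_nonneg _)
            positivity
        _ = (1 + ε) * dist x y := by ring
    calc |hhat x - hhat y| ≤ Lr * ((1 + ε) * dist x y) := e1
      _ = (Lr * (1 + ε)) * dist x y := by ring
  -- (E) differentiability
  have hδcont : Continuous δ := hδcd.continuous
  set sPos : Set (EuclideanSpace ℝ (Fin d)) := {x | 0 < δ x} with hsPosdef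
  have hsopen : IsOpen sPos := isOpen_lt continuous_const hδcont
  have hΩsub : Ω ⊆ sPos := fun x hx => hδpos x hx
  set g : EuclideanSpace ℝ (Fin d) → EuclideanSpace ℝ (Fin d) → ℝ :=
    fun p z => ((δ p)⁻¹)^d * φn ((δ p)⁻¹ • z) with hgdef
  have hgs : ∀ p z, p ∈ sPos → z ∉ closedBall (0 : EuclideanSpace ℝ (Fin d)) ε → g p z = 0 := by
    intro p z hp hz
    have hp' : (0:ℝ) < δ p := hp
    have hz' : ε < ‖z‖ := by
      rw [mem_closedBall, dist_zero_right, not_le] at hz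
      exact hz
    have h2 : φn ((δ p)⁻¹ • z) = 0 := by
      have hns : (δ p)⁻¹ • z ∉ Function.support φn := by
        rw [hφn, φ.support_normed_eq]
        rw [mem_ball, dist_zero_right, not_lt]
        show (φ.rOut : ℝ) ≤ ‖(δ p)⁻¹ • z‖
        rw [norm_smul, Real.norm_eq_abs, abs_of_pos (inv_pos.2 hp')]
        have hd1 : δ p ≤ ‖z‖ := le_trans (hδε p) hz'.le
        have : (1:ℝ) = (δ p)⁻¹ * δ p := (inv_mul_cancel₀ hp'.ne').symm
        calc (φ.rOut : ℝ) = 1 := rfl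
          _ = (δ p)⁻¹ * δ p := (inv_mul_cancel₀ hp'.ne').symm
          _ ≤ (δ p)⁻¹ * ‖z‖ := mul_le_mul_of_nonneg_left hd1 (inv_pos.2 hp').le
      by_contra hne
      exact hns hne
    rw [hgdef]
    simp only [h2, mul_zero]
  have hgcd : ContDiffOn ℝ 1 (Function.uncurry g) (sPos ×ˢ univ) := by
    have hinv : ContDiffOn ℝ 1
        (fun q : EuclideanSpace ℝ (Fin d) × EuclideanSpace ℝ (Fin d) => (δ q.1)⁻¹)
        (sPos ×ˢ univ) := by
      apply ContDiffOn.inv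
      · exact (hδcd.comp contDiff_fst).contDiffOn
      · rintro ⟨p, z⟩ hq
        have : p ∈ sPos := hq.1
        exact ne_of_gt this
    have hsm : ContDiffOn ℝ 1
        (fun q : EuclideanSpace ℝ (Fin d) × EuclideanSpace ℝ (Fin d) => (δ q.1)⁻¹ • q.2)
        (sPos ×ˢ univ) := hinv.smul contDiff_snd.contDiffOn
    have hφ1 : ContDiff ℝ 1 φn := φ.contDiff_normed
    exact (hinv.pow d).mul (hφ1.comp_contDiffOn hsm)
  have hloc : LocallyIntegrable h volume := hL.continuous.locallyIntegrable
  have hconv : ContDiffOn ℝ 1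
      (fun x => (MeasureTheory.convolution h (g x) (ContinuousLinearMap.mul ℝ ℝ) volume) (id x))
      sPos :=
    contDiffOn_convolution_right_with_param_comp (ContinuousLinearMap.mul ℝ ℝ)
      contDiffOn_id hsopen (isCompact_closedBall 0 ε) hgs hloc hgcd
  have heq : ∀ x ∈ sPos, hhat x =
      (MeasureTheory.convolution h (g x) (ContinuousLinearMap.mul ℝ ℝ) volume) (id x) := by
    intro x hx
    have hc : (0:ℝ) < δ x := hx
    set c : ℝ := δ x with hcdef
    have e0 : ∀ u : EuclideanSpace ℝ (Fin d),
        φn u • h (x - c • u) = (fun w => φn (c⁻¹ • w) • h (x - w)) (c • u) := by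
      intro u
      simp only [smul_smul, inv_mul_cancel₀ hc.ne', one_smul]
    have e1 : hhat x = |((c ^ d)⁻¹)| • ∫ w, φn (c⁻¹ • w) • h (x - w) := by
      rw [hhatdef]
      simp only
      calc (∫ u, φn u • h (x - c • u))
          = ∫ u, (fun w => φn (c⁻¹ • w) • h (x - w)) (c • u) := by
            congr 1
            ext u
            exact e0 u
        _ = |((c ^ Module.finrank ℝ (EuclideanSpace ℝ (Fin d)))⁻¹)| •
              ∫ w, φn (c⁻¹ • w) • h (x - w) :=
            MeasureTheory.Measure.integral_comp_smul volume (fun w => φn (c⁻¹ • w) • h (x - w)) c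
        _ = |((c ^ d)⁻¹)| • ∫ w, φn (c⁻¹ • w) • h (x - w) := by
            rw [finrank_euclideanSpace_fin]
    have e2 : (MeasureTheory.convolution h (g x) (ContinuousLinearMap.mul ℝ ℝ) volume) (id x)
        = ∫ t, h t * g x (x - t) := by
      rw [MeasureTheory.convolution_def]
      simp only [ContinuousLinearMap.mul_apply', id]
    have e3 : ∫ t, h t * g x (x - t) = ∫ w, g x w * h (x - w) := by
      have e3' := MeasureTheory.integral_sub_left_eq_self
        (fun w => g x w * h (x - w)) volume x
      calc (∫ t, h t * g x (x - t)) = ∫ t, (fun w => g x w * h (x - w)) (x - t) := by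
            congr 1
            ext t
            simp only [sub_sub_cancel]
            ring
        _ = ∫ w, g x w * h (x - w) := e3'
    rw [e1, e2, e3]
    rw [abs_of_nonneg (by positivity : (0:ℝ) ≤ (c ^ d)⁻¹), ← inv_pow]
    rw [← integral_smul]
    congr 1
    ext w
    rw [hgdef]
    simp only [smul_eq_mul]
    ring
  have hcdOn : ContDiffOn ℝ 1 hhat sPos := hconv.congr heq
  refine ⟨hhat, hC, ?_, ?_, hA⟩
  · intro x
    calc |hhat x - h x| ≤ Lr * δ x := hB x
      _ ≤ Lr * ε := mul_le_mul_of_nonneg_left (hδε x) hLr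
  · intro x hx
    have hx' : x ∈ sPos := hΩsub hx
    exact ((hcdOn.differentiableOn one_ne_zero) x hx').differentiableAt (hsopen.mem_nhds hx')

theorem stmt_11 (d : ℕ) (hd : 1 ≤ d)
    (U : ℕ → Set (EuclideanSpace ℝ (Fin d))) (hU : ∀ i, IsBox d (U i))
    (hdisj : Pairwise fun i j => Disjoint (interior (U i)) (interior (U j)))
    (h : EuclideanSpace ℝ (Fin d) → ℝ) (hh : ∃ K : NNReal, LipschitzWith K h)
    (σ : ℝ) (hσ : 0 < σ) :
    ∃ hhat : EuclideanSpace ℝ (Fin d) → ℝ,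
      (∃ K : NNReal, LipschitzWith K hhat) ∧
      (∀ x, |hhat x - h x| ≤ σ) ∧
      (lipConst hhat : ℝ) ≤ (lipConst h : ℝ) + σ ∧
      (∀ x ∈ ⋃ i, interior (U i), DifferentiableAt ℝ hhat x) ∧
      ∀ x ∉ ⋃ i, interior (U i), hhat x = h x := by
  classical
  set Ω : Set (EuclideanSpace ℝ (Fin d)) := ⋃ i, interior (U i) with hΩdef
  have hΩ : IsOpen Ω := isOpen_iUnion fun i => isOpen_interior
  have hL : LipschitzWith (lipConst h) h := lipschitzWith_lipConst h hh
  set Lr : ℝ := (lipConst h : ℝ) with hLrdef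
  have hLr : 0 ≤ Lr := (lipConst h).coe_nonneg
  set ε : ℝ := σ / (2 * (Lr + 1)) with hεdef
  have hε : 0 < ε := by positivity
  have hεσ : Lr * ε ≤ σ / 2 := by
    have h2 : (0:ℝ) < 2 * (Lr + 1) := by positivity
    rw [hεdef, mul_comm, div_mul_eq_mul_div, div_le_div_iff₀ h2 (by norm_num)]
    nlinarith
  obtain ⟨δ, hδcd, hδ0, hδε, hδpos, hδzero, hδlip⟩ := exists_smooth_minorant d Ω hΩ hε
  obtain ⟨hhat, hC, hB, hD, hA⟩ :=
    main_construction d Ω hΩ δ hδcd hδ0 hε hδε hδpos hδzero hδlip h hL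
  have hKnn : (0:ℝ) ≤ Lr * (1 + ε) := by positivity
  have hlipschitz : LipschitzWith (Lr * (1 + ε)).toNNReal hhat := by
    apply LipschitzWith.of_dist_le_mul
    intro x y
    rw [Real.coe_toNNReal _ hKnn]
    exact hC x y
  refine ⟨hhat, ⟨_, hlipschitz⟩, ?_, ?_, hD, hA⟩
  · intro x
    calc |hhat x - h x| ≤ Lr * ε := hB x
      _ ≤ σ / 2 := hεσ
      _ ≤ σ := by linarith
  · have h1 : lipConst hhat ≤ (Lr * (1 + ε)).toNNReal := lipConst_le hlipschitz
    have h2 : (lipConst hhat : ℝ) ≤ Lr * (1 + ε) := by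
      calc (lipConst hhat : ℝ) ≤ ((Lr * (1 + ε)).toNNReal : ℝ) := NNReal.coe_le_coe.2 h1
        _ = Lr * (1 + ε) := Real.coe_toNNReal _ hKnn
    calc (lipConst hhat : ℝ) ≤ Lr * (1 + ε) := h2
      _ = Lr + Lr * ε := by ring
      _ ≤ Lr + σ / 2 := by linarith
      _ ≤ Lr + σ := by linarith
end

section
/- Let d ≥ 1 be an integer, let x ∈ ℝ^d, let e be a unit vector in ℝ^d, let f, h : ℝ^d → ℝ be Lipschitz functions and let Δ > 0. Let {(t_{k,1}, t_{k,2})}_{k=1}^N, where 0 < t_{k,1} ≤ t_{k,2} and N ∈ ℕ ∪ {∞}, be a finite or countable collection of open (possibly empty/degenerate) intervals contained in (0, ∞) such that: (i) if N = ∞ then (t_{k,2} − t_{k,1})/t_{k,1} → 0 as k → ∞, and (ii) f(x + te) = h(x + te) for every t in ([0, Δ) \ ⋃_{k=1}^N (t_{k,1}, t_{k,2})) ∪ ⋃_{k=1}^N {t_{k,1}, t_{k,2}}. Then the one-sided directional derivative f'(x, e) exists if and only if h'(x, e) exists, and in that case f'(x, e) = h'(x, e). -/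
open Metric Set Filter

/-- The one-sided directional derivative `f'(x,e) = L`:
`(f(x+te) - f x)/t → L` as `t → 0+`. -/
def HasDirDeriv {d : ℕ} (f : EuclideanSpace ℝ (Fin d) → ℝ)
    (x e : EuclideanSpace ℝ (Fin d)) (L : ℝ) : Prop :=
  Tendsto (fun t : ℝ => (f (x + t • e) - f x) / t) (nhdsWithin 0 (Set.Ioi 0)) (nhds L)

theorem stmt_12 (d : ℕ) (hd : 1 ≤ d) (x e : EuclideanSpace ℝ (Fin d)) (he : ‖e‖ = 1)
    (f h : EuclideanSpace ℝ (Fin d) → ℝ)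
    (hf : ∃ K : NNReal, LipschitzWith K f) (hh : ∃ K : NNReal, LipschitzWith K h)
    (Δ : ℝ) (hΔ : 0 < Δ) (N : ℕ∞) (t1 t2 : ℕ → ℝ)
    (hpos : ∀ k : ℕ, (k : ℕ∞) < N → 0 < t1 k ∧ t1 k ≤ t2 k)
    (hshrink : N = ⊤ →
      Tendsto (fun k => (t2 k - t1 k) / t1 k) atTop (nhds 0))
    (hagree : ∀ t : ℝ,
      t ∈ (Set.Ico (0 : ℝ) Δ \ ⋃ k : ℕ, ⋃ _ : (k : ℕ∞) < N, Set.Ioo (t1 k) (t2 k)) ∪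
        (⋃ k : ℕ, ⋃ _ : (k : ℕ∞) < N, ({t1 k, t2 k} : Set ℝ)) →
      f (x + t • e) = h (x + t • e)) :
    ∀ L : ℝ, HasDirDeriv f x e L ↔ HasDirDeriv h x e L := by
  classical
  obtain ⟨Kf, hKf⟩ := hf
  obtain ⟨Kh, hKh⟩ := hh
  set C : ℝ := (Kf : ℝ) + Kh with hC
  have hC0 : (0:ℝ) ≤ C := by positivity
  have h0 : f x = h x := by
    have := hagree 0 (Or.inl ⟨⟨le_refl 0, hΔ⟩, by
      simp only [Set.mem_iUnion, Set.mem_Ioo, not_exists]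
      intro k hk hc
      exact absurd hc.1 (not_lt.2 (hpos k hk).1.le)⟩)
    simpa using this
  have key : Tendsto (fun t : ℝ => (f (x + t • e) - h (x + t • e)) / t)
      (nhdsWithin 0 (Set.Ioi 0)) (nhds 0) := by
    rw [Metric.tendsto_nhdsWithin_nhds]
    intro ε hε
    set ε' : ℝ := ε / (C + 1) with hε'
    have hε'pos : 0 < ε' := by positivity
    obtain ⟨K, hK⟩ : ∃ K : ℕ, ∀ k, K ≤ k → (k : ℕ∞) < N →
        (t2 k - t1 k) / t1 k < ε' := by
      cases N with
      | top =>
          have := (hshrink rfl).eventually (eventually_lt_nhds hε'pos)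
          obtain ⟨K, hK⟩ := eventually_atTop.mp this
          exact ⟨K, fun k hk _ => hK k hk⟩
      | coe n =>
          refine ⟨n, fun k hk hkN => absurd hkN ?_⟩
          exact_mod_cast not_lt.2 hk
    set S : Finset ℝ :=
      insert Δ ((Finset.range K).image (fun k : ℕ => if (k:ℕ∞) < N then t1 k else Δ)) with hS
    have hSne : S.Nonempty := ⟨Δ, Finset.mem_insert_self _ _⟩
    set δ : ℝ := S.min' hSne with hδ
    have hδpos : 0 < δ := by
      rw [hδ, Finset.lt_min'_iff]
      intro b hb
      rw [hS, Finset.mem_insert] at hb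
      rcases hb with rfl | hb
      · exact hΔ
      · obtain ⟨k, _, rfl⟩ := Finset.mem_image.mp hb
        split
        · exact (hpos k (by assumption)).1
        · exact hΔ
    have hδΔ : δ ≤ Δ := Finset.min'_le _ _ (Finset.mem_insert_self _ _)
    refine ⟨δ, hδpos, fun t ht hdist => ?_⟩
    rw [Real.dist_eq, sub_zero, abs_of_pos (Set.mem_Ioi.mp ht)] at hdist
    have ht0 : 0 < t := Set.mem_Ioi.mp ht
    rw [Real.dist_eq, sub_zero]
    by_cases hmem : t ∈ ⋃ k : ℕ, ⋃ _ : (k : ℕ∞) < N, Set.Ioo (t1 k) (t2 k)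
    · simp only [Set.mem_iUnion, Set.mem_Ioo] at hmem
      obtain ⟨k, hkN, ht1, ht2⟩ := hmem
      have hkK : K ≤ k := by
        by_contra hlt
        push_neg at hlt
        have : δ ≤ t1 k := by
          apply Finset.min'_le
          rw [hS, Finset.mem_insert]
          right
          exact Finset.mem_image.mpr ⟨k, Finset.mem_range.mpr hlt, if_pos hkN⟩
        linarith
      have ht1pos : 0 < t1 k := (hpos k hkN).1
      have hratio := hK k hkK hkN
      have hgap : t2 k - t1 k < ε' * t1 k := by
        rwa [div_lt_iff₀ ht1pos] at hratio
      have heq1 : f (x + t1 k • e) = h (x + t1 k • e) := by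
        refine hagree (t1 k) (Or.inr ?_)
        simp only [Set.mem_iUnion]
        exact ⟨k, hkN, Or.inl rfl⟩
      have hdnorm : dist (x + t • e) (x + t1 k • e) = t - t1 k := by
        rw [dist_eq_norm]
        have : (x + t • e) - (x + t1 k • e) = (t - t1 k) • e := by
          rw [add_sub_add_left_eq_sub, ← sub_smul]
        rw [this, norm_smul, he, mul_one, Real.norm_eq_abs, abs_of_nonneg (by linarith)]
      have hest : |f (x + t • e) - h (x + t • e)| ≤ C * (t - t1 k) := by
        have e1 : dist (f (x + t • e)) (f (x + t1 k • e)) ≤ Kf * (t - t1 k) := by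
          have := hKf.dist_le_mul (x + t • e) (x + t1 k • e)
          rwa [hdnorm] at this
        have e2 : dist (h (x + t • e)) (h (x + t1 k • e)) ≤ Kh * (t - t1 k) := by
          have := hKh.dist_le_mul (x + t • e) (x + t1 k • e)
          rwa [hdnorm] at this
        calc |f (x + t • e) - h (x + t • e)|
            = |(f (x + t • e) - f (x + t1 k • e)) + (h (x + t1 k • e) - h (x + t • e))| := by
              rw [heq1]; ring_nf
          _ ≤ |f (x + t • e) - f (x + t1 k • e)| + |h (x + t1 k • e) - h (x + t • e)| :=
              abs_add_le _ _
          _ ≤ Kf * (t - t1 k) + Kh * (t - t1 k) := by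
              rw [Real.dist_eq] at e1 e2
              rw [abs_sub_comm (h (x + t1 k • e))]
              exact add_le_add e1 e2
          _ = C * (t - t1 k) := by rw [hC]; ring
      have hnum : |f (x + t • e) - h (x + t • e)| ≤ C * ε' * t := by
        calc |f (x + t • e) - h (x + t • e)| ≤ C * (t - t1 k) := hest
          _ ≤ C * (t2 k - t1 k) := by
              apply mul_le_mul_of_nonneg_left (by linarith) hC0
          _ ≤ C * (ε' * t1 k) := mul_le_mul_of_nonneg_left hgap.le hC0
          _ ≤ C * ε' * t := by
              rw [mul_assoc]
              apply mul_le_mul_of_nonneg_left _ hC0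
              exact mul_le_mul_of_nonneg_left (by linarith) hε'pos.le
      have hfin : C * ε' < ε := by
        rw [hε', mul_div_assoc', div_lt_iff₀ (by positivity : (0:ℝ) < C + 1)]
        nlinarith
      calc |(f (x + t • e) - h (x + t • e)) / t|
          = |f (x + t • e) - h (x + t • e)| / t := by
            rw [abs_div, abs_of_pos ht0]
        _ ≤ C * ε' := by rw [div_le_iff₀ ht0]; exact hnum
        _ < ε := hfin
    · have : f (x + t • e) = h (x + t • e) :=
        hagree t (Or.inl ⟨⟨ht0.le, lt_of_lt_of_le hdist hδΔ⟩, hmem⟩)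
      simp [this, hε]
  intro L
  constructor
  · intro hF
    have heq : ∀ t : ℝ, (h (x + t • e) - h x) / t =
        (f (x + t • e) - f x) / t - (f (x + t • e) - h (x + t • e)) / t := by
      intro t; rw [← h0]; ring
    have := hF.sub key
    rw [sub_zero] at this
    exact this.congr fun t => (heq t).symm
  · intro hH
    have heq : ∀ t : ℝ, (f (x + t • e) - f x) / t =
        (h (x + t • e) - h x) / t + (f (x + t • e) - h (x + t • e)) / t := by
      intro t; rw [h0]; ring
    have := hH.add key
    rw [add_zero] at this
    exact this.congr fun t => (heq t).symm
end
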